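/- arXiv:1809.04972 — 4 statements merged into one kernel-verified Lean document; each statement's English description precedes it below -/
import Mathlib

section
/- Let $\{\rho[t]\}_{t\geq 0}$ be a real sequence with $|\rho[t]| < L$ and $|\rho[t+1] - \rho[t]| \leq M/t$ for all $t \geq 1$, and define $\theta[t] = \sum_{m=0}^{t-1}\alpha(1-\alpha)^m \rho[t-m]$ for a fixed $\alpha \in (0,1]$. Then $\lim_{t\to\infty}(\rho[t] - \theta[t]) = 0$. -/
/-!
Statement 8: An exponential moving average `θ[t] = ∑_{m=0}^{t-1} α(1-α)^m ρ[t-m]`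
of a bounded sequence `ρ` with `|ρ[t+1] - ρ[t]| ≤ M/t` satisfies
`ρ[t] - θ[t] → 0`.
-/

open Finset Filter

namespace Stmt8

theorem ema_tracks_slowly_varying (ρ θ : ℕ → ℝ) (L M α : ℝ)
    (hLpos : 0 < L) (hMpos : 0 < M)
    (hL : ∀ t, |ρ t| < L)
    (hM : ∀ t : ℕ, 1 ≤ t → |ρ (t + 1) - ρ t| ≤ M / t)
    (hα : α ∈ Set.Ioc (0:ℝ) 1)
    (hθ : ∀ t, θ t = ∑ m ∈ Finset.range t, α * (1 - α) ^ m * ρ (t - m)) :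
    Tendsto (fun t => ρ t - θ t) atTop (nhds 0) := by
  obtain ⟨hα0, hα1⟩ := hα
  set c : ℝ := 1 - α with hc
  have hac : α = 1 - c := by rw [hc]; ring
  have hc0 : 0 ≤ c := by simp [hc]; linarith
  have hc1 : c < 1 := by simp [hc]; linarith
  -- geometric sums
  have hgeom : ∀ n : ℕ, ∑ m ∈ Finset.range n, α * c ^ m = 1 - c ^ n := by
    intro n
    rw [← Finset.mul_sum, geom_sum_eq (ne_of_lt hc1)]
    have hcm1 : c - 1 ≠ 0 := by intro h; apply absurd hc1; simp; linarith
    field_simp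
    rw [hac]; ring
  -- key algebraic identity
  have key : ∀ t, ρ t - θ t =
      (∑ m ∈ Finset.range t, α * c ^ m * (ρ t - ρ (t - m))) + c ^ t * ρ t := by
    intro t
    have h1 : ∑ m ∈ Finset.range t, α * c ^ m * (ρ t - ρ (t - m))
        = (∑ m ∈ Finset.range t, α * c ^ m) * ρ t
          - ∑ m ∈ Finset.range t, α * c ^ m * ρ (t - m) := by
      rw [Finset.sum_mul, ← Finset.sum_sub_distrib]
      exact Finset.sum_congr rfl (fun m _ => by ring)
    rw [h1, hgeom t, hθ t]
    ring
  -- telescoping bound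
  have hdiff : ∀ b a : ℕ, 1 ≤ a → a ≤ b → |ρ b - ρ a| ≤ ((b:ℝ) - a) * M / a := by
    intro b
    induction b with
    | zero => intro a h1 h2; omega
    | succ b ih =>
      intro a h1 h2
      have ha0 : (0:ℝ) < a := by exact_mod_cast h1
      rcases Nat.lt_or_ge b a with h | h
      · have : a = b + 1 := by omega
        subst this; simp
      · have hb1 : 1 ≤ b := le_trans h1 h
        have key1 := hM b hb1
        have key2 := ih a h1 h
        have hb0 : (0:ℝ) < b := by exact_mod_cast hb1
        have hab' : (a:ℝ) ≤ b := by exact_mod_cast h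
        have hMb : M / b ≤ M / a := div_le_div_of_nonneg_left hMpos.le ha0 hab'
        calc |ρ (b+1) - ρ a| ≤ |ρ (b+1) - ρ b| + |ρ b - ρ a| := by
              have h' : ρ (b+1) - ρ a = (ρ (b+1) - ρ b) + (ρ b - ρ a) := by ring
              rw [h']; exact abs_add_le _ _
          _ ≤ M / a + ((b:ℝ) - a) * M / a := add_le_add (key1.trans hMb) key2
          _ = (((b:ℕ)+1:ℕ):ℝ) * M / a - (a:ℝ) * M / a := by push_cast; ring
          _ = (((b+1:ℕ):ℝ) - a) * M / a := by push_cast; ring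
  -- the dominating sequence
  set g : ℕ → ℝ := fun t =>
    M / ((Nat.sqrt t : ℝ) - 1) + 2 * L * c ^ (Nat.sqrt t) + L * c ^ t with hg
  -- main eventual bound
  have hbound : ∀ t : ℕ, 9 ≤ t → |ρ t - θ t| ≤ g t := by
    intro t ht
    set K := Nat.sqrt t with hKdef
    have hK3 : 3 ≤ K := Nat.le_sqrt.2 (by omega)
    have hKK : K * K ≤ t := by have := Nat.sqrt_le' t; nlinarith [this]
    have hKt : K < t := by nlinarith
    have hKtR : ((t - K : ℕ):ℝ) = (t:ℝ) - K := by
      rw [Nat.cast_sub hKt.le]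
    have hK3R : (3:ℝ) ≤ (K:ℝ) := by exact_mod_cast hK3
    have hKKR : (K:ℝ) * K ≤ (t:ℝ) := by exact_mod_cast hKK
    have htKpos : (0:ℝ) < (t:ℝ) - K := by
      have : (K:ℝ) < t := by exact_mod_cast hKt
      linarith
    have hDnn : 0 ≤ (K:ℝ) * M / ((t:ℝ) - K) := by positivity
    -- step 1
    have hone : |ρ t - θ t| ≤
        (∑ m ∈ Finset.range t, α * c ^ m * |ρ t - ρ (t - m)|) + L * c ^ t := by
      rw [key t]
      calc |(∑ m ∈ Finset.range t, α * c ^ m * (ρ t - ρ (t - m))) + c ^ t * ρ t|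
          ≤ |∑ m ∈ Finset.range t, α * c ^ m * (ρ t - ρ (t - m))| + |c ^ t * ρ t| :=
            abs_add_le _ _
        _ ≤ (∑ m ∈ Finset.range t, α * c ^ m * |ρ t - ρ (t - m)|) + L * c ^ t := by
            apply add_le_add
            · refine (Finset.abs_sum_le_sum_abs _ _).trans (le_of_eq ?_)
              refine Finset.sum_congr rfl (fun m _ => ?_)
              rw [abs_mul, abs_mul, abs_of_nonneg hα0.le, abs_of_nonneg (pow_nonneg hc0 m)]
            · rw [abs_mul, abs_pow, abs_of_nonneg hc0, mul_comm]
              exact mul_le_mul_of_nonneg_right (hL t).le (pow_nonneg hc0 t)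
    -- split the sum
    have hsplit : ∑ m ∈ Finset.range t, α * c ^ m * |ρ t - ρ (t - m)|
        = (∑ m ∈ Finset.range (K+1), α * c ^ m * |ρ t - ρ (t - m)|)
          + ∑ m ∈ Finset.Ico (K+1) t, α * c ^ m * |ρ t - ρ (t - m)| := by
      rw [Finset.range_eq_Ico, Finset.range_eq_Ico]
      exact (Finset.sum_Ico_consecutive _ (Nat.zero_le _) (by omega : K + 1 ≤ t)).symm
    -- first part
    have hpart1 : (∑ m ∈ Finset.range (K+1), α * c ^ m * |ρ t - ρ (t - m)|)
        ≤ (K:ℝ) * M / ((t:ℝ) - K) := by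
      have hterm : ∀ m ∈ Finset.range (K+1),
          α * c ^ m * |ρ t - ρ (t - m)| ≤ α * c ^ m * ((K:ℝ) * M / ((t:ℝ) - K)) := by
        intro m hm
        have hmK : m ≤ K := by simpa [Nat.lt_succ_iff] using hm
        have hmt : m < t := lt_of_le_of_lt hmK hKt
        have h1m : 1 ≤ t - m := by omega
        have habs : |ρ t - ρ (t - m)| ≤ ((t:ℝ) - ((t - m : ℕ):ℝ)) * M / ((t - m : ℕ):ℝ) :=
          hdiff t (t - m) h1m (Nat.sub_le t m)
        have hcast : ((t - m : ℕ):ℝ) = (t:ℝ) - m := Nat.cast_sub hmt.le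
        have hmR : (m:ℝ) ≤ K := by exact_mod_cast hmK
        have htmpos : (0:ℝ) < (t:ℝ) - m := by
          have : (m:ℝ) < t := by exact_mod_cast hmt
          linarith
        have h2 : ((t:ℝ) - ((t - m : ℕ):ℝ)) * M / ((t - m : ℕ):ℝ)
            = (m:ℝ) * M / ((t:ℝ) - m) := by rw [hcast]; ring_nf
        have h3 : (m:ℝ) * M / ((t:ℝ) - m) ≤ (K:ℝ) * M / ((t:ℝ) - K) := by
          apply div_le_div₀ (by positivity) (by nlinarith) htKpos (by linarith)
        have h4 : |ρ t - ρ (t - m)| ≤ (K:ℝ) * M / ((t:ℝ) - K) := by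
          calc |ρ t - ρ (t - m)| ≤ _ := habs
            _ = (m:ℝ) * M / ((t:ℝ) - m) := h2
            _ ≤ _ := h3
        exact mul_le_mul_of_nonneg_left h4 (by positivity)
      calc (∑ m ∈ Finset.range (K+1), α * c ^ m * |ρ t - ρ (t - m)|)
          ≤ ∑ m ∈ Finset.range (K+1), α * c ^ m * ((K:ℝ) * M / ((t:ℝ) - K)) :=
            Finset.sum_le_sum hterm
        _ = (∑ m ∈ Finset.range (K+1), α * c ^ m) * ((K:ℝ) * M / ((t:ℝ) - K)) := by
            rw [Finset.sum_mul]
        _ = (1 - c ^ (K+1)) * ((K:ℝ) * M / ((t:ℝ) - K)) := by rw [hgeom]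
        _ ≤ 1 * ((K:ℝ) * M / ((t:ℝ) - K)) := by
            apply mul_le_mul_of_nonneg_right _ hDnn
            have : 0 ≤ c ^ (K+1) := pow_nonneg hc0 _
            linarith
        _ = (K:ℝ) * M / ((t:ℝ) - K) := one_mul _
    -- bound first part by M / (K - 1)
    have hpart1' : (K:ℝ) * M / ((t:ℝ) - K) ≤ M / ((K:ℝ) - 1) := by
      have hKm1 : (0:ℝ) < (K:ℝ) - 1 := by linarith
      have hlow : (K:ℝ) * ((K:ℝ) - 1) ≤ (t:ℝ) - K := by nlinarith
      calc (K:ℝ) * M / ((t:ℝ) - K) ≤ (K:ℝ) * M / ((K:ℝ) * ((K:ℝ) - 1)) :=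
            div_le_div_of_nonneg_left (by positivity) (by positivity) hlow
        _ = M / ((K:ℝ) - 1) := mul_div_mul_left M ((K:ℝ) - 1) (by linarith)
    -- second part
    have hpart2 : (∑ m ∈ Finset.Ico (K+1) t, α * c ^ m * |ρ t - ρ (t - m)|)
        ≤ 2 * L * c ^ K := by
      have hterm : ∀ m ∈ Finset.Ico (K+1) t,
          α * c ^ m * |ρ t - ρ (t - m)| ≤ α * c ^ m * (2 * L) := by
        intro m _
        have habs : |ρ t - ρ (t - m)| ≤ 2 * L := by
          calc |ρ t - ρ (t - m)| = |ρ t + -ρ (t - m)| := by rw [sub_eq_add_neg]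
            _ ≤ |ρ t| + |-ρ (t - m)| := abs_add_le _ _
            _ = |ρ t| + |ρ (t - m)| := by rw [abs_neg]
            _ ≤ 2 * L := by have := hL t; have := hL (t - m); linarith
        exact mul_le_mul_of_nonneg_left habs (by positivity)
      calc (∑ m ∈ Finset.Ico (K+1) t, α * c ^ m * |ρ t - ρ (t - m)|)
          ≤ ∑ m ∈ Finset.Ico (K+1) t, α * c ^ m * (2 * L) := Finset.sum_le_sum hterm
        _ = (∑ m ∈ Finset.Ico (K+1) t, α * c ^ m) * (2 * L) := by rw [Finset.sum_mul]
        _ = (c ^ (K+1) - c ^ t) * (2 * L) := by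
            rw [Finset.sum_Ico_eq_sub _ (by omega : K + 1 ≤ t), hgeom, hgeom]; ring
        _ ≤ c ^ K * (2 * L) := by
            apply mul_le_mul_of_nonneg_right _ (by positivity)
            have h1 : c ^ (K+1) ≤ c ^ K := pow_le_pow_of_le_one hc0 hc1.le (Nat.le_succ K)
            have h2 : 0 ≤ c ^ t := pow_nonneg hc0 t
            linarith
        _ = 2 * L * c ^ K := by ring
    calc |ρ t - θ t| ≤ _ := hone
      _ = (∑ m ∈ Finset.range (K+1), α * c ^ m * |ρ t - ρ (t - m)|)
          + (∑ m ∈ Finset.Ico (K+1) t, α * c ^ m * |ρ t - ρ (t - m)|) + L * c ^ t := by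
          rw [hsplit]
      _ ≤ M / ((K:ℝ) - 1) + 2 * L * c ^ K + L * c ^ t :=
          add_le_add (add_le_add (hpart1.trans hpart1') hpart2) le_rfl
      _ = g t := by rw [hg]
  -- tendsto of g
  have hsqrt : Tendsto Nat.sqrt atTop atTop :=
    tendsto_atTop_atTop.2 fun n => ⟨n * n, fun t ht => Nat.le_sqrt.2 ht⟩
  have hsqrtR : Tendsto (fun t => (Nat.sqrt t : ℝ)) atTop atTop :=
    tendsto_natCast_atTop_atTop.comp hsqrt
  have hg1 : Tendsto (fun t => M / ((Nat.sqrt t : ℝ) - 1)) atTop (nhds 0) :=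
    Tendsto.div_atTop tendsto_const_nhds
      (tendsto_atTop_add_const_right _ (-1) hsqrtR |>.congr (fun t => by ring))
  have hcpow : Tendsto (fun n : ℕ => c ^ n) atTop (nhds 0) :=
    tendsto_pow_atTop_nhds_zero_of_lt_one hc0 hc1
  have hg2 : Tendsto (fun t => 2 * L * c ^ (Nat.sqrt t)) atTop (nhds 0) := by
    have := (hcpow.comp hsqrt).const_mul (2 * L)
    simpa using this
  have hg3 : Tendsto (fun t : ℕ => L * c ^ t) atTop (nhds 0) := by
    have := hcpow.const_mul L
    simpa using this
  have hgtend : Tendsto g atTop (nhds 0) := by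
    have := (hg1.add hg2).add hg3
    simpa using this
  refine squeeze_zero_norm' ?_ hgtend
  filter_upwards [eventually_ge_atTop 9] with t ht
  simpa [Real.norm_eq_abs] using hbound t ht

end Stmt8
end

section
/- The penalty function $V_i(\theta_i, \theta_{-i}) = \int_{-\infty}^{\theta_i} x\, \partial_x s_i(x, \theta_{-i})\, dx$, where $s_i(\theta) = \mathbb{E}_{p_\theta}[\sigma_i]$ for the Ising distribution $p_\theta$, admits the closed form $V_i(\theta) = \theta_i s_i(\theta) + \ln(1 - s_i(\theta))$. -/
/-!
Statement 12: The penalty function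
`V_i(θ_i, θ_{-i}) = ∫_{-∞}^{θ_i} x ∂_x s_i(x, θ_{-i}) dx`
admits the closed form `V_i(θ) = θ_i s_i(θ) + ln(1 - s_i(θ))`.
-/

open Finset MeasureTheory

namespace Stmt12

variable {V : Type*} [Fintype V] [DecidableEq V]

noncomputable def ind (b : Bool) : ℝ := if b then 1 else 0

noncomputable def weight (E : Finset (V × V)) (θv : V → ℝ) (θe : V × V → ℝ)
    (σ : V → Bool) : ℝ :=
  ∑ i, θv i * ind (σ i) + ∑ e ∈ E, θe e * ind (σ e.1) * ind (σ e.2)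

noncomputable def Z (E : Finset (V × V)) (θv : V → ℝ) (θe : V × V → ℝ) : ℝ :=
  ∑ σ : V → Bool, Real.exp (weight E θv θe σ)

noncomputable def p (E : Finset (V × V)) (θv : V → ℝ) (θe : V × V → ℝ)
    (σ : V → Bool) : ℝ :=
  Real.exp (weight E θv θe σ) / Z E θv θe

/-- node marginal `s_i(θ)` -/
noncomputable def sN (E : Finset (V × V)) (θv : V → ℝ) (θe : V × V → ℝ) (i : V) : ℝ :=
  ∑ σ : V → Bool, p E θv θe σ * ind (σ i)

/-- `s_i` as a function of its own parameter `θ_i` -/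
noncomputable def sfun (E : Finset (V × V)) (θv : V → ℝ) (θe : V × V → ℝ) (i : V)
    (x : ℝ) : ℝ :=
  sN E (Function.update θv i x) θe i

/-- penalty `V_i(y, θ_{-i}) = ∫_{-∞}^{y} x ∂_x s_i(x, θ_{-i}) dx` -/
lemma expHalf_integrableOn (y : ℝ) :
    IntegrableOn (fun x => Real.exp (x / 2)) (Set.Iic y) := by
  have hF : ∀ x : ℝ, HasDerivAt (fun t => 2 * Real.exp (t / 2)) (Real.exp (x / 2)) x := by
    intro x
    have h1 : HasDerivAt (fun t : ℝ => t / 2) (1 / 2) x := by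
      simpa using (hasDerivAt_id x).div_const 2
    have h2 := (Real.hasDerivAt_exp (x / 2)).comp x h1
    have h3 := h2.const_mul 2
    refine h3.congr_deriv ?_
    ring
  have hc : Continuous (fun x : ℝ => Real.exp (x / 2)) :=
    Real.continuous_exp.comp (continuous_id.div_const 2)
  apply integrableOn_Iic_of_intervalIntegral_norm_bounded (μ := volume)
      (l := Filter.atBot) (a := fun x : ℝ => x) (2 * Real.exp (y / 2)) y
      (fun a => hc.integrableOn_Ioc) Filter.tendsto_id
  filter_upwards [Filter.eventually_le_atBot y] with a ha
  have hint : IntervalIntegrable (fun x => Real.exp (x / 2)) volume a y :=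
    hc.intervalIntegrable a y
  have hnrm : (∫ x in a..y, ‖Real.exp (x / 2)‖) = ∫ x in a..y, Real.exp (x / 2) := by
    congr 1; funext x; exact Real.norm_of_nonneg (Real.exp_pos _).le
  rw [hnrm, intervalIntegral.integral_eq_sub_of_hasDerivAt (fun x _ => hF x) hint]
  have := Real.exp_pos (a / 2)
  nlinarith

lemma calc_main (A B y : ℝ) (hA : 0 < A) (hB : 0 < B) :
    ∫ x in Set.Iio y, x * deriv (fun x => A * Real.exp x / (A * Real.exp x + B)) x
      = y * (A * Real.exp y / (A * Real.exp y + B))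
        + Real.log (1 - A * Real.exp y / (A * Real.exp y + B)) := by
  have hD : ∀ x : ℝ, 0 < A * Real.exp x + B :=
    fun x => add_pos (mul_pos hA (Real.exp_pos x)) hB
  set g : ℝ → ℝ := fun x => A * Real.exp x / (A * Real.exp x + B) with hgdef
  set g' : ℝ → ℝ := fun x => A * B * Real.exp x / (A * Real.exp x + B) ^ 2 with hg'def
  have hDd : ∀ x : ℝ, HasDerivAt (fun x => A * Real.exp x + B) (A * Real.exp x) x :=
    fun x => ((Real.hasDerivAt_exp x).const_mul A).add_const B
  have hg : ∀ x : ℝ, HasDerivAt g (g' x) x := by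
    intro x
    have h := ((Real.hasDerivAt_exp x).const_mul A).div (hDd x) (hD x).ne'
    refine h.congr_deriv ?_
    simp only [hg'def]
    field_simp
    ring
  have hderiv : ∀ x : ℝ, deriv g x = g' x := fun x => (hg x).deriv
  set F : ℝ → ℝ := fun x => x * g x + (Real.log B - Real.log (A * Real.exp x + B)) with hFdef
  have hF : ∀ x : ℝ, HasDerivAt F (x * g' x) x := by
    intro x
    have h1 : HasDerivAt (fun x => x * g x) (1 * g x + x * g' x) x :=
      (hasDerivAt_id x).mul (hg x)
    have h2 : HasDerivAt (fun x => Real.log B - Real.log (A * Real.exp x + B))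
        (-(A * Real.exp x / (A * Real.exp x + B))) x :=
      (((hDd x).log (hD x).ne')).const_sub (Real.log B)
    have h3 := h1.add h2
    refine h3.congr_deriv ?_
    simp only [hgdef]
    ring
  -- tendsto F atBot 0
  have htend : Filter.Tendsto F Filter.atBot (nhds 0) := by
    have hxe : Filter.Tendsto (fun x : ℝ => x * Real.exp x) Filter.atBot (nhds 0) := by
      have h1 : Filter.Tendsto (fun x : ℝ => -(x * Real.exp (-x))) Filter.atTop (nhds 0) := by
        have := Real.tendsto_pow_mul_exp_neg_atTop_nhds_zero 1
        simpa using this.neg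
      have h2 := h1.comp Filter.tendsto_neg_atBot_atTop
      convert h2 using 2 with x
      simp [Function.comp]
    have hDt : Filter.Tendsto (fun x : ℝ => A * Real.exp x + B) Filter.atBot (nhds B) := by
      have := Real.tendsto_exp_atBot.const_mul A
      simpa using this.add_const B
    have h1 : Filter.Tendsto (fun x => x * g x) Filter.atBot (nhds 0) := by
      have heq : ∀ x, x * g x = (x * Real.exp x) * (A / (A * Real.exp x + B)) := by
        intro x; simp only [hgdef]; field_simp
      have hconst : Filter.Tendsto (fun _ : ℝ => A) Filter.atBot (nhds A) :=
        tendsto_const_nhds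
      have hquot := hconst.div hDt hB.ne'
      have h := hxe.mul hquot
      rw [zero_mul] at h
      exact Filter.Tendsto.congr (fun x => (heq x).symm) h
    have h2 : Filter.Tendsto (fun x => Real.log B - Real.log (A * Real.exp x + B))
        Filter.atBot (nhds 0) := by
      have hlog := (Real.continuousAt_log hB.ne').tendsto.comp hDt
      have := (tendsto_const_nhds (x := Real.log B)).sub hlog
      simpa using this
    have := h1.add h2
    simpa using this
  -- integrability of x * g' x on Iic y
  have hint : IntegrableOn (fun x => x * g' x) (Set.Iic y) := by
    set C : ℝ := A / B * (2 / Real.exp 1) + |y| * (B / A) with hC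
    apply Integrable.mono' ((expHalf_integrableOn y).const_mul C)
    · apply Continuous.aestronglyMeasurable
      have : Continuous g' := by
        simp only [hg'def]
        exact (continuous_const.mul Real.continuous_exp).div
          (((continuous_const.mul Real.continuous_exp).add continuous_const).pow 2)
          (fun x => pow_ne_zero 2 (hD x).ne')
      exact continuous_id.mul this
    · filter_upwards [MeasureTheory.ae_restrict_mem measurableSet_Iic] with x hx
      have hxy : x ≤ y := hx
      have hg'pos : 0 < g' x := by
        simp only [hg'def]
        positivity
      rw [Real.norm_eq_abs, abs_mul, abs_of_pos hg'pos]
      rcases le_or_gt x 0 with hx0 | hx0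
      · -- x ≤ 0 : |x| * g' x ≤ (A/B)*(2/e) * exp (x/2)
        have hb1 : g' x ≤ A / B * Real.exp x := by
          simp only [hg'def]
          rw [div_le_iff₀ (by positivity)]
          have : B * B ≤ (A * Real.exp x + B) ^ 2 := by nlinarith [mul_pos hA (Real.exp_pos x)]
          calc A * B * Real.exp x = (A / B * Real.exp x) * (B * B) := by field_simp
            _ ≤ (A / B * Real.exp x) * (A * Real.exp x + B) ^ 2 :=
                mul_le_mul_of_nonneg_left this (by positivity)
        have hb2 : |x| * Real.exp x ≤ 2 / Real.exp 1 * Real.exp (x / 2) := by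
          rw [abs_of_nonpos hx0]
          have he2 := Real.exp_pos (x / 2)
          have key : -x * Real.exp (x / 2) ≤ 2 / Real.exp 1 := by
            have h := Real.add_one_le_exp (-x / 2 - 1)
            have h4 : (-x / 2) * Real.exp (x / 2)
                ≤ Real.exp (-x / 2 - 1) * Real.exp (x / 2) :=
              mul_le_mul_of_nonneg_right (by linarith) he2.le
            have h5 : Real.exp (-x / 2 - 1) * Real.exp (x / 2) = 1 / Real.exp 1 := by
              rw [← Real.exp_add, show -x / 2 - 1 + x / 2 = -1 by ring, Real.exp_neg]
              rw [one_div]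
            have h6 : -x * Real.exp (x / 2) = 2 * ((-x / 2) * Real.exp (x / 2)) := by ring
            rw [h6]
            calc 2 * ((-x / 2) * Real.exp (x / 2))
                ≤ 2 * (1 / Real.exp 1) := by linarith [h4.trans_eq h5]
              _ = 2 / Real.exp 1 := by ring
          calc -x * Real.exp x = (-x * Real.exp (x / 2)) * Real.exp (x / 2) := by
                rw [mul_assoc, ← Real.exp_add]
                norm_num
            _ ≤ 2 / Real.exp 1 * Real.exp (x / 2) :=
                mul_le_mul_of_nonneg_right key (Real.exp_pos _).le
        calc |x| * g' x ≤ |x| * (A / B * Real.exp x) :=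
              mul_le_mul_of_nonneg_left hb1 (abs_nonneg x)
          _ = (|x| * Real.exp x) * (A / B) := by ring
          _ ≤ (2 / Real.exp 1 * Real.exp (x / 2)) * (A / B) :=
              mul_le_mul_of_nonneg_right hb2 (by positivity)
          _ ≤ C * Real.exp (x / 2) := by
              simp only [hC]
              have : 0 ≤ |y| * (B / A) := by positivity
              nlinarith [Real.exp_pos (x / 2)]
      · -- 0 < x ≤ y
        have hexp : Real.exp (-x) * Real.exp x = 1 := by
          rw [← Real.exp_add]; norm_num
        have hb1 : g' x ≤ B / A * Real.exp (-x) := by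
          simp only [hg'def]
          rw [div_le_iff₀ (by positivity)]
          have h2 : (A * Real.exp x) ^ 2 ≤ (A * Real.exp x + B) ^ 2 := by
            nlinarith [mul_pos hA (Real.exp_pos x), hB]
          have expand : B / A * Real.exp (-x) * (A * Real.exp x) ^ 2
              = A * B * (Real.exp (-x) * Real.exp x) * Real.exp x := by
            field_simp
          calc A * B * Real.exp x = B / A * Real.exp (-x) * (A * Real.exp x) ^ 2 := by
                rw [expand, hexp]; ring
            _ ≤ B / A * Real.exp (-x) * (A * Real.exp x + B) ^ 2 :=
                mul_le_mul_of_nonneg_left h2 (by positivity)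
        have hxabs : |x| ≤ |y| := by
          rw [abs_of_pos hx0, abs_of_pos (lt_of_lt_of_le hx0 hxy)]; exact hxy
        have hexple : Real.exp (-x) ≤ 1 := Real.exp_le_one_iff.mpr (by linarith)
        have hhalf : (1 : ℝ) ≤ Real.exp (x / 2) := by
          rw [Real.one_le_exp_iff]; linarith
        calc |x| * g' x ≤ |y| * (B / A * Real.exp (-x)) :=
              mul_le_mul hxabs hb1 hg'pos.le (abs_nonneg y)
          _ ≤ |y| * (B / A) := by
              have : B / A * Real.exp (-x) ≤ B / A * 1 :=
                mul_le_mul_of_nonneg_left hexple (by positivity)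
              rw [mul_one] at this
              exact mul_le_mul_of_nonneg_left this (abs_nonneg y)
          _ ≤ C * Real.exp (x / 2) := by
              simp only [hC]
              have h1 : 0 ≤ A / B * (2 / Real.exp 1) := by positivity
              have h2 : 0 ≤ |y| * (B / A) := by positivity
              nlinarith
  -- apply FTC
  have key := integral_Iic_of_hasDerivAt_of_tendsto' (a := y) (f := F)
      (f' := fun x => x * g' x) (m := 0) (fun x _ => hF x) hint htend
  rw [← integral_Iic_eq_integral_Iio]
  have hcongr : (∫ x in Set.Iic y, x * deriv g x) = ∫ x in Set.Iic y, x * g' x := by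
    congr 1; funext x; rw [hderiv]
  rw [hcongr, key, sub_zero]
  simp only [hFdef, hgdef]
  have h1mg : 1 - A * Real.exp y / (A * Real.exp y + B) = B / (A * Real.exp y + B) := by
    field_simp
    ring
  rw [h1mg, Real.log_div hB.ne' (hD y).ne']

noncomputable def Acoef (E : Finset (V × V)) (θv : V → ℝ) (θe : V × V → ℝ) (i : V) : ℝ :=
  ∑ σ ∈ univ.filter (fun σ : V → Bool => σ i), Real.exp (weight E (Function.update θv i 0) θe σ)

noncomputable def Bcoef (E : Finset (V × V)) (θv : V → ℝ) (θe : V × V → ℝ) (i : V) : ℝ :=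
  ∑ σ ∈ univ.filter (fun σ : V → Bool => ¬ σ i), Real.exp (weight E (Function.update θv i 0) θe σ)

lemma Acoef_pos (E : Finset (V × V)) (θv : V → ℝ) (θe : V × V → ℝ) (i : V) :
    0 < Acoef E θv θe i := by
  apply Finset.sum_pos (fun σ _ => Real.exp_pos _)
  exact ⟨fun _ => true, by simp⟩

lemma Bcoef_pos (E : Finset (V × V)) (θv : V → ℝ) (θe : V × V → ℝ) (i : V) :
    0 < Bcoef E θv θe i := by
  apply Finset.sum_pos (fun σ _ => Real.exp_pos _)
  exact ⟨fun _ => false, by simp⟩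

lemma weight_update (E : Finset (V × V)) (θv : V → ℝ) (θe : V × V → ℝ) (i : V)
    (x : ℝ) (σ : V → Bool) :
    weight E (Function.update θv i x) θe σ
      = x * ind (σ i) + weight E (Function.update θv i 0) θe σ := by
  unfold weight
  have key : ∀ g : ℝ, ∑ j, Function.update θv i g j * ind (σ j)
      = g * ind (σ i) + ∑ j ∈ univ.erase i, θv j * ind (σ j) := by
    intro g
    rw [← Finset.add_sum_erase _ _ (mem_univ i)]
    simp only [Function.update_self]
    congr 1
    apply Finset.sum_congr rfl
    intro j hj
    rw [Function.update_of_ne (Finset.ne_of_mem_erase hj)]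
  rw [key x, key 0]
  ring

lemma sfun_eq (E : Finset (V × V)) (θv : V → ℝ) (θe : V × V → ℝ) (i : V) (x : ℝ) :
    sfun E θv θe i x
      = Acoef E θv θe i * Real.exp x / (Acoef E θv θe i * Real.exp x + Bcoef E θv θe i) := by
  have hZ : Z E (Function.update θv i x) θe
      = Acoef E θv θe i * Real.exp x + Bcoef E θv θe i := by
    unfold Z Acoef Bcoef
    rw [← Finset.sum_filter_add_sum_filter_not univ (fun σ : V → Bool => σ i)]
    rw [Finset.sum_mul]
    congr 1
    · apply Finset.sum_congr rfl
      intro σ hσ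
      have : σ i = true := by simpa using (Finset.mem_filter.mp hσ).2
      rw [weight_update, this]
      simp [ind, Real.exp_add, mul_comm]
    · apply Finset.sum_congr rfl
      intro σ hσ
      have : σ i = false := by simpa using (Finset.mem_filter.mp hσ).2
      rw [weight_update, this]
      simp [ind]
  unfold sfun sN p
  rw [hZ]
  simp only [div_mul_eq_mul_div]
  rw [← Finset.sum_div]
  congr 1
  rw [← Finset.sum_filter_add_sum_filter_not univ (fun σ : V → Bool => σ i)]
  unfold Acoef
  rw [Finset.sum_mul]
  have h2 : ∑ σ ∈ univ.filter (fun σ : V → Bool => ¬ σ i),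
      Real.exp (weight E (Function.update θv i x) θe σ) * ind (σ i) = 0 := by
    apply Finset.sum_eq_zero
    intro σ hσ
    have : σ i = false := by simpa using (Finset.mem_filter.mp hσ).2
    simp [ind, this]
  rw [h2, add_zero]
  apply Finset.sum_congr rfl
  intro σ hσ
  have : σ i = true := by simpa using (Finset.mem_filter.mp hσ).2
  rw [weight_update, this]
  simp [ind, Real.exp_add, mul_comm]


noncomputable def pen (E : Finset (V × V)) (θv : V → ℝ) (θe : V × V → ℝ) (i : V)
    (y : ℝ) : ℝ :=
  ∫ x in Set.Iio y, x * deriv (sfun E θv θe i) x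

/-- the penalty admits the closed form
`V_i(θ) = θ_i s_i(θ) + ln(1 - s_i(θ))`. -/
theorem penalty_closed_form
    (E : Finset (V × V)) (θv : V → ℝ) (θe : V × V → ℝ) (i : V) :
    pen E θv θe i (θv i) =
      θv i * sN E θv θe i + Real.log (1 - sN E θv θe i) := by
  have hA := Acoef_pos E θv θe i
  have hB := Bcoef_pos E θv θe i
  have hs : sfun E θv θe i
      = fun x => Acoef E θv θe i * Real.exp x
          / (Acoef E θv θe i * Real.exp x + Bcoef E θv θe i) :=
    funext (sfun_eq E θv θe i)
  have hsy : sN E θv θe i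
      = Acoef E θv θe i * Real.exp (θv i)
          / (Acoef E θv θe i * Real.exp (θv i) + Bcoef E θv θe i) := by
    have h := sfun_eq E θv θe i (θv i)
    unfold sfun at h
    rw [Function.update_eq_self] at h
    exact h
  unfold pen
  rw [hs, calc_main _ _ _ hA hB, hsy]

end Stmt12
end

section
/- The game CoordGain(β) is an ordinal potential game with potential $P(\theta) = -\sup_{\mu,\lambda} L(\mu,\lambda;\theta/\beta)$, where $L$ is the Lagrangian of the entropy-regularized problem A-CG-OPT: on the region where all marginals $s_n(\theta) \in (0,1)$, for every node player $i$, $\mathrm{sgn}\,\partial\Psi_i(\theta)/\partial\theta_i = \mathrm{sgn}\,\partial P(\theta)/\partial\theta_i$, and for every edge player $(i,j)$, $\mathrm{sgn}\,\partial\Psi_{ij}(\theta)/\partial\theta_{ij} = \mathrm{sgn}\,\partial P(\theta)/\partial\theta_{ij}$. -/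
/-!
Statement 13: CoordGain(β) is an ordinal potential game with potential
`P(θ) = -sup_{μ,λ} L(μ,λ; θ/β)`, where `L` is the Lagrangian of A-CG-OPT:
on the region where all marginals lie in `(0,1)`, for every node player `i`
and edge player `(i,j)`,
`sgn ∂Ψ_n(θ)/∂θ_n = sgn ∂P(θ)/∂θ_n`.
-/

open Finset

namespace Stmt13

variable {V : Type*} [Fintype V] [DecidableEq V]

noncomputable def ind (b : Bool) : ℝ := if b then 1 else 0

noncomputable def weight (E : Finset (V × V)) (θv : V → ℝ) (θe : V × V → ℝ)
    (σ : V → Bool) : ℝ :=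
  ∑ i, θv i * ind (σ i) + ∑ e ∈ E, θe e * ind (σ e.1) * ind (σ e.2)

noncomputable def Z (E : Finset (V × V)) (θv : V → ℝ) (θe : V × V → ℝ) : ℝ :=
  ∑ σ : V → Bool, Real.exp (weight E θv θe σ)

noncomputable def p (E : Finset (V × V)) (θv : V → ℝ) (θe : V × V → ℝ)
    (σ : V → Bool) : ℝ :=
  Real.exp (weight E θv θe σ) / Z E θv θe

noncomputable def sN (E : Finset (V × V)) (θv : V → ℝ) (θe : V × V → ℝ) (i : V) : ℝ :=
  ∑ σ : V → Bool, p E θv θe σ * ind (σ i)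

noncomputable def sE (E : Finset (V × V)) (θv : V → ℝ) (θe : V × V → ℝ) (e : V × V) : ℝ :=
  ∑ σ : V → Bool, p E θv θe σ * (ind (σ e.1) * ind (σ e.2))

def IsDist (μ : (V → Bool) → ℝ) : Prop :=
  (∀ σ, 0 ≤ μ σ) ∧ ∑ σ : V → Bool, μ σ = 1

noncomputable def H (μ : (V → Bool) → ℝ) : ℝ :=
  -∑ σ : V → Bool, μ σ * Real.log (μ σ)

noncomputable def meanN (μ : (V → Bool) → ℝ) (i : V) : ℝ :=
  ∑ σ : V → Bool, μ σ * ind (σ i)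

noncomputable def meanE (μ : (V → Bool) → ℝ) (e : V × V) : ℝ :=
  ∑ σ : V → Bool, μ σ * (ind (σ e.1) * ind (σ e.2))

/-- node payoff `Ψ_i(θ) = -C_i(s_i(θ)) - (1/β) V_i(θ)` with penalty
`V_i(θ) = θ_i s_i(θ) + ln(1 - s_i(θ))` (the closed form of
`∫_{-∞}^{θ_i} x ∂_x s_i(x,θ_{-i}) dx`). -/
noncomputable def ΨN (E : Finset (V × V)) (C : V → ℝ → ℝ) (β : ℝ)
    (θv : V → ℝ) (θe : V × V → ℝ) (i : V) : ℝ :=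
  -C i (sN E θv θe i) -
    (1 / β) * (θv i * sN E θv θe i + Real.log (1 - sN E θv θe i))

/-- edge payoff `Ψ_{ij}(θ) = U_{ij}(s_{ij}(θ)) - (1/β) V_{ij}(θ)` -/
noncomputable def ΨE (E : Finset (V × V)) (U : V × V → ℝ → ℝ) (β : ℝ)
    (θv : V → ℝ) (θe : V × V → ℝ) (e : V × V) : ℝ :=
  U e (sE E θv θe e) -
    (1 / β) * (θe e * sE E θv θe e + Real.log (1 - sE E θv θe e))

/-- Lagrangian of A-CG-OPT with multipliers `k = θ/β` -/
noncomputable def Lag (E : Finset (V × V)) (U : V × V → ℝ → ℝ) (C : V → ℝ → ℝ)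
    (β : ℝ) (θv : V → ℝ) (θe : V × V → ℝ)
    (μ : (V → Bool) → ℝ) (lv : V → ℝ) (le : V × V → ℝ) : ℝ :=
  ∑ e ∈ E, U e (le e) - ∑ i, C i (lv i) + (1 / β) * H μ +
    ∑ i, (θv i / β) * (meanN μ i - lv i) +
    ∑ e ∈ E, (θe e / β) * (meanE μ e - le e)

/-- potential `P(θ) = -sup_{μ,λ} L(μ,λ;θ/β)` -/
noncomputable def P (E : Finset (V × V)) (U : V × V → ℝ → ℝ) (C : V → ℝ → ℝ)
    (β : ℝ) (θv : V → ℝ) (θe : V × V → ℝ) : ℝ :=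
  -sSup {y : ℝ | ∃ μ lv le, IsDist μ ∧ (∀ i, lv i ∈ Set.Icc (0:ℝ) 1) ∧
    (∀ e, le e ∈ Set.Icc (0:ℝ) 1) ∧ y = Lag E U C β θv θe μ lv le}


open Topology Filter


lemma convexOn_lin (c : ℝ) : ConvexOn ℝ (Set.Icc (0:ℝ) 1) (fun x => c * x) :=
  ⟨convex_Icc 0 1, fun x _ y _ a b _ _ _ => by
    simp only [smul_eq_mul]; exact le_of_eq (by ring)⟩

lemma exists_max {f : ℝ → ℝ} (hf : ContinuousOn f (Set.Icc 0 1)) :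
    ∃ x, x ∈ Set.Icc (0:ℝ) 1 ∧ IsMaxOn f (Set.Icc 0 1) x := by
  obtain ⟨x, hx, h⟩ := isCompact_Icc.exists_isMaxOn ⟨0, by norm_num⟩ hf
  exact ⟨x, hx, h⟩

lemma max_lt {f : ℝ → ℝ} (hf : StrictConcaveOn ℝ (Set.Icc 0 1) f)
    {a b : ℝ} (ha : a ∈ Set.Icc (0:ℝ) 1) (hb : b ∈ Set.Icc (0:ℝ) 1)
    (hmax : IsMaxOn f (Set.Icc 0 1) a) (hne : b ≠ a) : f b < f a := by
  have hba : f b ≤ f a := hmax hb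
  rcases lt_or_eq_of_le hba with h | h
  · exact h
  · exfalso
    have hmid : (1/2 : ℝ) • a + (1/2 : ℝ) • b ∈ Set.Icc (0:ℝ) 1 :=
      hf.1 ha hb (by norm_num) (by norm_num) (by norm_num)
    have h2 := hf.2 ha hb (Ne.symm hne) (by norm_num : (0:ℝ) < 1/2)
      (by norm_num : (0:ℝ) < 1/2) (by norm_num)
    have h3 : f ((1/2 : ℝ) • a + (1/2 : ℝ) • b) ≤ f a := hmax hmid
    simp only [smul_eq_mul] at h2 h3
    rw [h] at h2
    linarith

lemma sign_mul_pos {a : ℝ} (ha : 0 < a) (b : ℝ) :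
    Real.sign (a * b) = Real.sign b := by
  rcases lt_trichotomy b 0 with h | h | h
  · rw [Real.sign_of_neg h, Real.sign_of_neg (mul_neg_of_pos_of_neg ha h)]
  · subst h; rw [mul_zero]
  · rw [Real.sign_of_pos h, Real.sign_of_pos (mul_pos ha h)]

/-- position of the maximizer of a strictly concave function versus derivative sign -/
lemma sign_eq_of_max {F : ℝ → ℝ} (hF : StrictConcaveOn ℝ (Set.Icc 0 1) F)
    {d s xs : ℝ} (hd : HasDerivAt F d s) (hs : s ∈ Set.Ioo (0:ℝ) 1)
    (hxs : xs ∈ Set.Icc (0:ℝ) 1) (hmax : IsMaxOn F (Set.Icc 0 1) xs) :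
    Real.sign d = Real.sign (xs - s) := by
  have hsI : s ∈ Set.Icc (0:ℝ) 1 := ⟨hs.1.le, hs.2.le⟩
  have hslope := hasDerivAt_iff_tendsto_slope.1 hd
  rcases lt_trichotomy d 0 with hneg | hzero | hpos
  · -- maximizer is to the left
    have hlt : xs < s := by
      by_contra hle
      push_neg at hle   -- s ≤ xs
      have h1 : ∀ᶠ y in 𝓝[<] s, slope F s y < 0 :=
        (hslope.eventually (eventually_lt_nhds hneg)).filter_mono
          (nhdsWithin_mono s (fun y hy => ne_of_lt hy))
      have h2 : Set.Ioo (0:ℝ) s ∈ 𝓝[<] s := Ioo_mem_nhdsLT_of_mem ⟨hs.1, le_refl s⟩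
      obtain ⟨y, hy1, hy2⟩ := (h1.and (eventually_of_mem h2 fun y hy => hy)).exists
      rw [slope_def_field] at hy1
      have hFy : F s < F y := by
        have hy' : y - s < 0 := by linarith [hy2.2]
        have h4 := mul_pos_of_neg_of_neg hy1 hy'
        rw [div_mul_cancel₀ _ (ne_of_lt hy')] at h4
        linarith
      -- concavity: s ∈ [y, xs], so min (F y) (F xs) ≤ F s
      have hyI : y ∈ Set.Icc (0:ℝ) 1 := ⟨hy2.1.le, hy2.2.le.trans hs.2.le⟩
      have hseg : s ∈ segment ℝ y xs := by
        rw [segment_eq_Icc (hy2.2.le.trans hle)]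
        exact ⟨hy2.2.le, hle⟩
      have hmin := hF.concaveOn.ge_on_segment hyI hxs hseg
      have hFyxs : F y ≤ F xs := hmax hyI
      rw [min_eq_left hFyxs] at hmin
      linarith
    rw [Real.sign_of_neg hneg, Real.sign_of_neg (by linarith : xs - s < 0)]
  · -- s is itself a maximizer
    have hmaxs : IsMaxOn F (Set.Icc 0 1) s := by
      intro y hy
      simp only [Set.mem_setOf_eq]
      by_contra hgt
      push_neg at hgt   -- F s < F y
      have hys : y ≠ s := by intro h; rw [h] at hgt; exact lt_irrefl _ hgt
      rcases lt_or_gt_of_ne hys with hlt | hgt'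
      · -- y < s
        have hc : slope F s y < 0 := by
          rw [slope_def_field]
          apply div_neg_of_pos_of_neg <;> linarith
        have h1 : ∀ᶠ z in 𝓝[<] s, slope F s y < slope F s z := by
          have : ∀ᶠ z in 𝓝 d, slope F s y < z := eventually_gt_nhds (by rw [hzero]; exact hc)
          exact (hslope.eventually this).filter_mono
            (nhdsWithin_mono s (fun z hz => ne_of_lt hz))
        have h2 : Set.Ioo y s ∈ 𝓝[<] s := Ioo_mem_nhdsLT_of_mem ⟨hlt, le_refl s⟩
        obtain ⟨z, hz1, hz2⟩ := (h1.and (eventually_of_mem h2 fun z hz => hz)).exists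
        -- strict concavity: slope F s z < slope F s y since y < z, both ≠ s
        have hzI : z ∈ Set.Icc (0:ℝ) 1 := ⟨hy.1.trans hz2.1.le, hz2.2.le.trans hs.2.le⟩
        have := hF.secant_strict_mono hsI hy hzI (ne_of_lt hlt) (ne_of_lt hz2.2) hz2.1
        rw [slope_def_field] at hz1
        rw [slope_def_field] at hz1
        linarith [this]
      · -- s < y
        have hc : 0 < slope F s y := by
          rw [slope_def_field]
          apply div_pos <;> linarith
        have h1 : ∀ᶠ z in 𝓝[>] s, slope F s z < slope F s y := by
          have : ∀ᶠ z in 𝓝 d, z < slope F s y := eventually_lt_nhds (by rw [hzero]; exact hc)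
          exact (hslope.eventually this).filter_mono
            (nhdsWithin_mono s (fun z hz => ne_of_gt hz))
        have h2 : Set.Ioo s y ∈ 𝓝[>] s := Ioo_mem_nhdsGT_of_mem ⟨le_refl s, hgt'⟩
        obtain ⟨z, hz1, hz2⟩ := (h1.and (eventually_of_mem h2 fun z hz => hz)).exists
        have hzI : z ∈ Set.Icc (0:ℝ) 1 := ⟨hs.1.le.trans hz2.1.le, hz2.2.le.trans hy.2⟩
        have := hF.secant_strict_mono hsI hzI hy (ne_of_gt hz2.1) (ne_of_gt hgt') hz2.2
        rw [slope_def_field] at hz1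
        rw [slope_def_field] at hz1
        linarith [this]
    have hxseq : xs = s := by
      by_contra hne
      have h1 := max_lt hF hsI hxs hmaxs hne
      have h2 : F s ≤ F xs := hmax hsI
      linarith
    rw [hxseq, sub_self, Real.sign_zero, hzero, Real.sign_zero]
  · -- maximizer is to the right
    have hlt : s < xs := by
      by_contra hle
      push_neg at hle   -- xs ≤ s
      have h1 : ∀ᶠ y in 𝓝[>] s, 0 < slope F s y :=
        (hslope.eventually (eventually_gt_nhds hpos)).filter_mono
          (nhdsWithin_mono s (fun y hy => ne_of_gt hy))
      have h2 : Set.Ioo s 1 ∈ 𝓝[>] s := Ioo_mem_nhdsGT_of_mem ⟨le_refl s, hs.2⟩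
      obtain ⟨y, hy1, hy2⟩ := (h1.and (eventually_of_mem h2 fun y hy => hy)).exists
      rw [slope_def_field] at hy1
      have hFy : F s < F y := by
        have hd0 : 0 < y - s := by linarith [hy2.1]
        have h4 := mul_pos hy1 hd0
        rw [div_mul_cancel₀ _ (ne_of_gt hd0)] at h4
        linarith
      have hyI : y ∈ Set.Icc (0:ℝ) 1 := ⟨hs.1.le.trans hy2.1.le, hy2.2.le⟩
      have hseg : s ∈ segment ℝ xs y := by
        rw [segment_eq_Icc (hle.trans hy2.1.le)]
        exact ⟨hle, hy2.1.le⟩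
      have hmin := hF.concaveOn.ge_on_segment hxs hyI hseg
      have hFyxs : F y ≤ F xs := hmax hyI
      rw [min_eq_right hFyxs] at hmin
      linarith
    rw [Real.sign_of_pos hpos, Real.sign_of_pos (by linarith : (0:ℝ) < xs - s)]

/-- Danskin / envelope theorem on `[0,1]`. -/
lemma danskin {f : ℝ → ℝ} (hf : ContinuousOn f (Set.Icc 0 1))
    (hconc : StrictConcaveOn ℝ (Set.Icc 0 1) f) {t0 xs : ℝ}
    (hxs : xs ∈ Set.Icc (0:ℝ) 1)
    (hmax : IsMaxOn (fun x => f x - t0 * x) (Set.Icc 0 1) xs) :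
    HasDerivAt (fun t => sSup ((fun x => f x - t * x) '' Set.Icc 0 1)) (-xs) t0 := by
  have hcont : ∀ t : ℝ, ContinuousOn (fun x => f x - t * x) (Set.Icc 0 1) :=
    fun t => hf.sub ((continuous_const.mul continuous_id).continuousOn)
  choose m hm hmmax using fun t : ℝ => exists_max (hcont t)
  have hGt : ∀ t : ℝ, sSup ((fun x => f x - t * x) '' Set.Icc 0 1) = f (m t) - t * m t := by
    intro t
    apply IsGreatest.csSup_eq
    constructor
    · exact Set.mem_image_of_mem _ (hm t)
    · rintro y ⟨x, hx, rfl⟩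
      exact hmmax t hx
  have hG0 : f (m t0) - t0 * m t0 = f xs - t0 * xs := by
    have h1 : f (m t0) - t0 * m t0 ≤ f xs - t0 * xs := hmax (hm t0)
    have h2 : f xs - t0 * xs ≤ f (m t0) - t0 * m t0 := hmmax t0 hxs
    linarith
  have hbound : ∀ t : ℝ,
      |(f (m t) - t * m t) - (f xs - t0 * xs) + (t - t0) * xs| ≤ |t - t0| * |xs - m t| := by
    intro t
    have hlow : f xs - t * xs ≤ f (m t) - t * m t := hmmax t hxs
    have hup : f (m t) - t0 * m t ≤ f xs - t0 * xs := hmax (hm t)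
    rw [abs_le]
    constructor
    · have : (0:ℝ) ≤ (f (m t) - t * m t) - (f xs - t0 * xs) + (t - t0) * xs := by nlinarith
      have h2 : (0:ℝ) ≤ |t - t0| * |xs - m t| := mul_nonneg (abs_nonneg _) (abs_nonneg _)
      linarith
    · have h1 : (f (m t) - t * m t) - (f xs - t0 * xs) + (t - t0) * xs
          ≤ (t - t0) * (xs - m t) := by nlinarith
      calc (f (m t) - t * m t) - (f xs - t0 * xs) + (t - t0) * xs
          ≤ (t - t0) * (xs - m t) := h1
        _ ≤ |(t - t0) * (xs - m t)| := le_abs_self _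
        _ = |t - t0| * |xs - m t| := abs_mul _ _
  -- continuity of the argmax at t0
  have hargmax : ∀ ε : ℝ, 0 < ε → ∃ δ : ℝ, 0 < δ ∧
      ∀ t : ℝ, |t - t0| < δ → |m t - xs| ≤ ε := by
    intro ε hε
    by_cases hK : ∃ z ∈ Set.Icc (0:ℝ) 1, ε ≤ |z - xs|
    · set K : Set ℝ := Set.Icc 0 1 ∩ {z | ε ≤ |z - xs|} with hKdef
      have hKc : IsCompact K := isCompact_Icc.inter_right
        (isClosed_le continuous_const ((continuous_id.sub continuous_const).abs))
      have hKne : K.Nonempty := by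
        obtain ⟨z, hz1, hz2⟩ := hK
        exact ⟨z, hz1, hz2⟩
      obtain ⟨z0, hz0K, hz0max⟩ := hKc.exists_isMaxOn hKne
        ((hcont t0).mono (Set.inter_subset_left))
      have hstrict : StrictConcaveOn ℝ (Set.Icc (0:ℝ) 1) (fun x => f x - t0 * x) :=
        hconc.sub_convexOn (convexOn_lin t0)
      have hz0ne : z0 ≠ xs := by
        intro h
        have := hz0K.2
        rw [h] at this
        simp only [Set.mem_setOf_eq, sub_self, abs_zero] at this
        linarith
      have hgap : (fun x => f x - t0 * x) z0 < (fun x => f x - t0 * x) xs :=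
        max_lt hstrict hxs hz0K.1 hmax hz0ne
      set gap : ℝ := (f xs - t0 * xs) - (f z0 - t0 * z0) with hgapdef
      have hgappos : 0 < gap := by simp only at hgap; simp only [hgapdef]; linarith
      refine ⟨gap / 3, by positivity, fun t ht => ?_⟩
      by_contra habs
      push_neg at habs   -- ε < |m t - xs|
      have hmtK : m t ∈ K := ⟨hm t, le_of_lt habs⟩
      have hFz0 : f (m t) - t0 * m t ≤ f z0 - t0 * z0 := hz0max hmtK
      have hopt : f xs - t * xs ≤ f (m t) - t * m t := hmmax t hxs
      have hxsb : |xs| ≤ 1 := by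
        rw [abs_le]; constructor <;> [linarith [hxs.1]; exact hxs.2]
      have hmtb : |m t| ≤ 1 := by
        have := hm t
        rw [abs_le]; constructor <;> [linarith [this.1]; exact this.2]
      have e1 : |(t - t0) * m t| ≤ |t - t0| := by
        rw [abs_mul]
        calc |t - t0| * |m t| ≤ |t - t0| * 1 := by
              exact mul_le_mul_of_nonneg_left hmtb (abs_nonneg _)
          _ = |t - t0| := mul_one _
      have e2 : |(t - t0) * xs| ≤ |t - t0| := by
        rw [abs_mul]
        calc |t - t0| * |xs| ≤ |t - t0| * 1 := by
              exact mul_le_mul_of_nonneg_left hxsb (abs_nonneg _)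
          _ = |t - t0| := mul_one _
      have e1' := (abs_le.1 e1)
      have e2' := (abs_le.1 e2)
      -- f (m t) - t * m t = (f (m t) - t0 * m t) - (t - t0) * m t
      have : gap ≤ 2 * |t - t0| := by nlinarith [e1'.1, e1'.2, e2'.1, e2'.2]
      linarith
    · push_neg at hK
      exact ⟨1, one_pos, fun t _ => le_of_lt (hK (m t) (hm t))⟩
  -- conclude
  have hfun : (fun t : ℝ => sSup ((fun x => f x - t * x) '' Set.Icc 0 1))
      = fun t => f (m t) - t * m t := funext hGt
  rw [hfun]
  rw [hasDerivAt_iff_isLittleO]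
  rw [Asymptotics.isLittleO_iff]
  intro c hc
  obtain ⟨δ, hδ, hδ'⟩ := hargmax c hc
  have hball : {t : ℝ | |t - t0| < δ} ∈ 𝓝 t0 := by
    have := Metric.ball_mem_nhds t0 hδ
    simpa [Metric.ball, Real.dist_eq] using this
  filter_upwards [hball] with t ht
  have h1 := hbound t
  have h2 := hδ' t ht
  have : |(f (m t) - t * m t) - (f (m t0) - t0 * m t0) + (t - t0) * xs| ≤ c * |t - t0| := by
    rw [hG0]
    calc |(f (m t) - t * m t) - (f xs - t0 * xs) + (t - t0) * xs|
        ≤ |t - t0| * |xs - m t| := h1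
      _ ≤ |t - t0| * c := by
          apply mul_le_mul_of_nonneg_left _ (abs_nonneg _)
          rw [abs_sub_comm]; exact h2
      _ = c * |t - t0| := mul_comm _ _
  simpa [Real.norm_eq_abs, smul_eq_mul, sub_eq_add_neg, neg_mul, mul_neg, mul_comm] using this


open Topology Filter

section Aux
variable {V : Type*} [Fintype V] [DecidableEq V]

lemma Z_pos (E : Finset (V × V)) (θv : V → ℝ) (θe : V × V → ℝ) :
    0 < Z E θv θe :=
  Finset.sum_pos (fun σ _ => Real.exp_pos _) Finset.univ_nonempty

lemma p_isDist (E : Finset (V × V)) (θv : V → ℝ) (θe : V × V → ℝ) :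
    IsDist (p E θv θe) := by
  constructor
  · intro σ
    exact div_nonneg (Real.exp_pos _).le (Z_pos E θv θe).le
  · unfold p
    rw [← Finset.sum_div]
    exact div_self (ne_of_gt (Z_pos E θv θe))

lemma gibbs_value (E : Finset (V × V)) (θv : V → ℝ) (θe : V × V → ℝ) :
    H (p E θv θe) + ∑ σ : V → Bool, p E θv θe σ * weight E θv θe σ
      = Real.log (Z E θv θe) := by
  have hZ := Z_pos E θv θe
  have hlog : ∀ σ : V → Bool, Real.log (p E θv θe σ)
      = weight E θv θe σ - Real.log (Z E θv θe) := by
    intro σ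
    unfold p
    rw [Real.log_div (Real.exp_ne_zero _) (ne_of_gt hZ), Real.log_exp]
  unfold H
  have hsum : ∑ σ : V → Bool, p E θv θe σ = 1 := (p_isDist E θv θe).2
  have : ∑ σ : V → Bool, p E θv θe σ * Real.log (p E θv θe σ)
      = ∑ σ : V → Bool, p E θv θe σ * weight E θv θe σ
        - (∑ σ : V → Bool, p E θv θe σ) * Real.log (Z E θv θe) := by
    rw [Finset.sum_mul, ← Finset.sum_sub_distrib]
    apply Finset.sum_congr rfl
    intro σ _
    rw [hlog σ]
    ring
  rw [this, hsum]
  ring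

lemma gibbs_le (w : (V → Bool) → ℝ) (μ : (V → Bool) → ℝ) (hμ : IsDist μ) :
    H μ + ∑ σ : V → Bool, μ σ * w σ ≤ Real.log (∑ σ : V → Bool, Real.exp (w σ)) := by
  classical
  obtain ⟨hnn, hsum⟩ := hμ
  set T := Finset.univ.filter (fun σ : V → Bool => μ σ ≠ 0) with hT
  have hTsub : T ⊆ Finset.univ := Finset.filter_subset _ _
  have hTpos : ∀ σ ∈ T, 0 < μ σ := fun σ hσ =>
    (hnn σ).lt_of_ne (Ne.symm (Finset.mem_filter.1 hσ).2)
  have hTsum : ∑ σ ∈ T, μ σ = 1 := by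
    rw [hT, Finset.sum_filter_ne_zero]
    exact hsum
  have hTne : T.Nonempty := by
    apply Finset.nonempty_of_ne_empty
    intro h
    rw [h, Finset.sum_empty] at hTsum
    norm_num at hTsum
  have key : H μ + ∑ σ : V → Bool, μ σ * w σ
      = ∑ σ ∈ T, μ σ * Real.log (Real.exp (w σ) / μ σ) := by
    have h1 : H μ + ∑ σ : V → Bool, μ σ * w σ
        = ∑ σ : V → Bool, μ σ * (w σ - Real.log (μ σ)) := by
      unfold H
      simp only [mul_sub, Finset.sum_sub_distrib]
      ring
    rw [h1]
    rw [← Finset.sum_filter_of_ne (s := Finset.univ)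
      (p := fun σ : V → Bool => μ σ ≠ 0) (f := fun σ => μ σ * (w σ - Real.log (μ σ)))
      (by intro σ _ hne h0; apply hne; simp [h0])]
    apply Finset.sum_congr rfl
    intro σ hσ
    rw [Real.log_div (Real.exp_ne_zero _) (ne_of_gt (hTpos σ hσ)), Real.log_exp]
  rw [key]
  have jensen := (strictConcaveOn_log_Ioi.concaveOn).le_map_sum
    (t := T) (w := μ) (p := fun σ => Real.exp (w σ) / μ σ)
    (fun σ hσ => (hTpos σ hσ).le) hTsum
    (fun σ hσ => Set.mem_Ioi.2 (div_pos (Real.exp_pos _) (hTpos σ hσ)))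
  simp only [smul_eq_mul] at jensen
  have hpts : ∑ σ ∈ T, μ σ * (Real.exp (w σ) / μ σ) = ∑ σ ∈ T, Real.exp (w σ) := by
    apply Finset.sum_congr rfl
    intro σ hσ
    rw [mul_div_cancel₀ _ (ne_of_gt (hTpos σ hσ))]
  rw [hpts] at jensen
  refine jensen.trans (Real.log_le_log (Finset.sum_pos (fun σ _ => Real.exp_pos _) hTne) ?_)
  exact Finset.sum_le_sum_of_subset_of_nonneg hTsub (fun σ _ _ => (Real.exp_pos _).le)

lemma Lag_split (E : Finset (V × V)) (U : V × V → ℝ → ℝ) (C : V → ℝ → ℝ)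
    (β : ℝ) (θv : V → ℝ) (θe : V × V → ℝ)
    (μ : (V → Bool) → ℝ) (lv : V → ℝ) (le : V × V → ℝ) :
    Lag E U C β θv θe μ lv le
      = (1/β) * (H μ + ∑ σ : V → Bool, μ σ * weight E θv θe σ)
        + ∑ e ∈ E, (U e (le e) - (θe e / β) * le e)
        + ∑ i, (-(C i (lv i)) - (θv i / β) * lv i) := by
  have h1 : ∑ i, (θv i / β) * meanN μ i
      = (1/β) * ∑ σ : V → Bool, μ σ * (∑ i, θv i * ind (σ i)) := by
    unfold meanN
    simp only [Finset.mul_sum]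
    rw [Finset.sum_comm]
    apply Finset.sum_congr rfl
    intro σ _
    apply Finset.sum_congr rfl
    intro i _
    ring
  have h2 : ∑ e ∈ E, (θe e / β) * meanE μ e
      = (1/β) * ∑ σ : V → Bool, μ σ * (∑ e ∈ E, θe e * ind (σ e.1) * ind (σ e.2)) := by
    unfold meanE
    simp only [Finset.mul_sum]
    rw [Finset.sum_comm]
    apply Finset.sum_congr rfl
    intro σ _
    apply Finset.sum_congr rfl
    intro e _
    ring
  unfold Lag weight
  simp only [mul_sub, Finset.sum_sub_distrib, sub_eq_add_neg, mul_add, Finset.sum_add_distrib,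
    neg_add, Finset.sum_neg_distrib]
  rw [h1, h2]
  simp only [mul_neg, Finset.sum_neg_distrib]
  ring


lemma sup_formula (E : Finset (V × V)) (U : V × V → ℝ → ℝ) (C : V → ℝ → ℝ)
    (β : ℝ) (hβ : 0 < β)
    (hUc : ∀ e ∈ E, ContinuousOn (U e) (Set.Icc 0 1))
    (hCc : ∀ i, ContinuousOn (C i) (Set.Icc 0 1))
    (θv : V → ℝ) (θe : V × V → ℝ) :
    sSup {y : ℝ | ∃ μ lv le, IsDist μ ∧ (∀ i, lv i ∈ Set.Icc (0:ℝ) 1) ∧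
      (∀ e, le e ∈ Set.Icc (0:ℝ) 1) ∧ y = Lag E U C β θv θe μ lv le}
    = (1/β) * Real.log (Z E θv θe)
      + ∑ e ∈ E, sSup ((fun x => U e x - (θe e / β) * x) '' Set.Icc 0 1)
      + ∑ i, sSup ((fun x => -(C i x) - (θv i / β) * x) '' Set.Icc 0 1) := by
  classical
  -- continuity of the per-coordinate objectives
  have hgec : ∀ e ∈ E, ContinuousOn (fun x => U e x - (θe e / β) * x) (Set.Icc (0:ℝ) 1) :=
    fun e he => (hUc e he).sub ((continuous_const.mul continuous_id).continuousOn)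
  have hgvc : ∀ i, ContinuousOn (fun x => -(C i x) - (θv i / β) * x) (Set.Icc (0:ℝ) 1) :=
    fun i => (hCc i).neg.sub ((continuous_const.mul continuous_id).continuousOn)
  -- choose maximizers
  choose xv hxv hxvmax using fun i => exists_max (hgvc i)
  have hexe : ∀ e : V × V, ∃ x, x ∈ Set.Icc (0:ℝ) 1 ∧
      (e ∈ E → IsMaxOn (fun x => U e x - (θe e / β) * x) (Set.Icc 0 1) x) := by
    intro e
    by_cases he : e ∈ E
    · obtain ⟨x, hx, hmax⟩ := exists_max (hgec e he)
      exact ⟨x, hx, fun _ => hmax⟩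
    · exact ⟨0, by norm_num, fun h => absurd h he⟩
  choose xe hxe hxemax using hexe
  -- the greatest-element descriptions of the inner suprema
  have hgv : ∀ i, IsGreatest ((fun x => -(C i x) - (θv i / β) * x) '' Set.Icc 0 1)
      (-(C i (xv i)) - (θv i / β) * xv i) := by
    intro i
    constructor
    · exact Set.mem_image_of_mem _ (hxv i)
    · rintro y ⟨x, hx, rfl⟩
      exact hxvmax i hx
  have hge : ∀ e ∈ E, IsGreatest ((fun x => U e x - (θe e / β) * x) '' Set.Icc 0 1)
      (U e (xe e) - (θe e / β) * xe e) := by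
    intro e he
    constructor
    · exact Set.mem_image_of_mem _ (hxe e)
    · rintro y ⟨x, hx, rfl⟩
      exact hxemax e he hx
  set M : ℝ := (1/β) * Real.log (Z E θv θe)
      + ∑ e ∈ E, sSup ((fun x => U e x - (θe e / β) * x) '' Set.Icc 0 1)
      + ∑ i, sSup ((fun x => -(C i x) - (θv i / β) * x) '' Set.Icc 0 1) with hM
  -- upper bound
  have hub : ∀ y ∈ {y : ℝ | ∃ μ lv le, IsDist μ ∧ (∀ i, lv i ∈ Set.Icc (0:ℝ) 1) ∧
      (∀ e, le e ∈ Set.Icc (0:ℝ) 1) ∧ y = Lag E U C β θv θe μ lv le}, y ≤ M := by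
    rintro y ⟨μ, lv, le, hμ, hlv, hle, rfl⟩
    rw [Lag_split]
    apply add_le_add (add_le_add ?_ ?_) ?_
    · apply mul_le_mul_of_nonneg_left _ (by positivity)
      exact gibbs_le _ μ hμ
    · apply Finset.sum_le_sum
      intro e he
      exact ((hge e he).2 (Set.mem_image_of_mem _ (hle e))).trans_eq
        ((hge e he).csSup_eq).symm
    · apply Finset.sum_le_sum
      intro i _
      exact ((hgv i).2 (Set.mem_image_of_mem _ (hlv i))).trans_eq
        ((hgv i).csSup_eq).symm
  -- membership: the value M is attained
  have hmem : M ∈ {y : ℝ | ∃ μ lv le, IsDist μ ∧ (∀ i, lv i ∈ Set.Icc (0:ℝ) 1) ∧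
      (∀ e, le e ∈ Set.Icc (0:ℝ) 1) ∧ y = Lag E U C β θv θe μ lv le} := by
    refine ⟨p E θv θe, xv, xe, p_isDist E θv θe, hxv, hxe, ?_⟩
    rw [Lag_split, gibbs_value, hM]
    congr 1
    · congr 1
      apply Finset.sum_congr rfl
      intro e he
      exact (hge e he).csSup_eq
    · apply Finset.sum_congr rfl
      intro i _
      exact (hgv i).csSup_eq
  apply le_antisymm
  · exact csSup_le ⟨M, hmem⟩ hub
  · exact le_csSup ⟨M, hub⟩ hmem

lemma weight_update_node (E : Finset (V × V)) (θv : V → ℝ) (θe : V × V → ℝ)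
    (i : V) (x : ℝ) (σ : V → Bool) :
    weight E (Function.update θv i x) θe σ
      = (weight E θv θe σ - θv i * ind (σ i)) + x * ind (σ i) := by
  unfold weight
  have : ∑ j, Function.update θv i x j * ind (σ j)
      = ∑ j, (θv j * ind (σ j) + (if j = i then (x - θv i) * ind (σ i) else 0)) := by
    apply Finset.sum_congr rfl
    intro j _
    by_cases h : j = i
    · subst h
      rw [Function.update_self, if_pos rfl]
      ring
    · rw [Function.update_of_ne h, if_neg h, add_zero]
  rw [this, Finset.sum_add_distrib, Finset.sum_ite_eq' Finset.univ i
    (fun _ => (x - θv i) * ind (σ i)), if_pos (Finset.mem_univ i)]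
  ring

lemma weight_update_edge (E : Finset (V × V)) (θv : V → ℝ) (θe : V × V → ℝ)
    {e : V × V} (he : e ∈ E) (x : ℝ) (σ : V → Bool) :
    weight E θv (Function.update θe e x) σ
      = (weight E θv θe σ - θe e * (ind (σ e.1) * ind (σ e.2)))
        + x * (ind (σ e.1) * ind (σ e.2)) := by
  unfold weight
  have : ∑ e' ∈ E, Function.update θe e x e' * ind (σ e'.1) * ind (σ e'.2)
      = ∑ e' ∈ E, (θe e' * ind (σ e'.1) * ind (σ e'.2)
          + (if e' = e then (x - θe e) * (ind (σ e.1) * ind (σ e.2)) else 0)) := by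
    apply Finset.sum_congr rfl
    intro e' _
    by_cases h : e' = e
    · subst h
      rw [Function.update_self, if_pos rfl]
      ring
    · rw [Function.update_of_ne h, if_neg h, add_zero]
  rw [this, Finset.sum_add_distrib, Finset.sum_ite_eq' E e
    (fun _ => (x - θe e) * (ind (σ e.1) * ind (σ e.2))), if_pos he]
  ring

/-- logistic facts -/
lemma logistic_mem {A B : ℝ} (hA : 0 < A) (hB : 0 < B) (x : ℝ) :
    A * Real.exp x / (A * Real.exp x + B) ∈ Set.Ioo (0:ℝ) 1 := by
  have h1 : 0 < A * Real.exp x := mul_pos hA (Real.exp_pos x)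
  have h2 : 0 < A * Real.exp x + B := by linarith
  constructor
  · positivity
  · rw [div_lt_one h2]
    linarith

lemma logistic_hasDeriv {A B : ℝ} (hA : 0 < A) (hB : 0 < B) (x : ℝ) :
    HasDerivAt (fun y => A * Real.exp y / (A * Real.exp y + B))
      ((A * Real.exp x / (A * Real.exp x + B))
        * (1 - A * Real.exp x / (A * Real.exp x + B))) x := by
  have h1 : 0 < A * Real.exp x := mul_pos hA (Real.exp_pos x)
  have h2 : 0 < A * Real.exp x + B := by linarith
  have hN : HasDerivAt (fun y => A * Real.exp y) (A * Real.exp x) x :=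
    (Real.hasDerivAt_exp x).const_mul A
  have hD : HasDerivAt (fun y => A * Real.exp y + B) (A * Real.exp x) x := hN.add_const B
  have := (hN.div hD (ne_of_gt h2) :
    HasDerivAt (fun y => A * Real.exp y / (A * Real.exp y + B)) _ x)
  refine this.congr_deriv ?_
  field_simp

lemma logistic_log_hasDeriv {A B : ℝ} (hA : 0 < A) (hB : 0 < B) (x : ℝ) :
    HasDerivAt (fun y => Real.log (A * Real.exp y + B))
      (A * Real.exp x / (A * Real.exp x + B)) x := by
  have h1 : 0 < A * Real.exp x := mul_pos hA (Real.exp_pos x)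
  have h2 : 0 < A * Real.exp x + B := by linarith
  have hN : HasDerivAt (fun y => A * Real.exp y) (A * Real.exp x) x :=
    (Real.hasDerivAt_exp x).const_mul A
  have hD : HasDerivAt (fun y => A * Real.exp y + B) (A * Real.exp x) x := hN.add_const B
  exact hD.log (ne_of_gt h2)

/-- splitting the partition function along a 0/1 statistic -/
lemma slice_sums (w0 q : (V → Bool) → ℝ) (hq : ∀ σ, q σ = 0 ∨ q σ = 1) :
    ∀ x : ℝ,
      (∑ σ : V → Bool, Real.exp (w0 σ + x * q σ))
        = (∑ σ ∈ Finset.univ.filter (fun σ : V → Bool => q σ = 1), Real.exp (w0 σ))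
            * Real.exp x
          + (∑ σ ∈ Finset.univ.filter (fun σ : V → Bool => ¬ q σ = 1), Real.exp (w0 σ))
      ∧ (∑ σ : V → Bool, Real.exp (w0 σ + x * q σ) * q σ)
        = (∑ σ ∈ Finset.univ.filter (fun σ : V → Bool => q σ = 1), Real.exp (w0 σ))
            * Real.exp x := by
  classical
  intro x
  constructor
  · rw [← Finset.sum_filter_add_sum_filter_not Finset.univ (fun σ : V → Bool => q σ = 1)]
    congr 1
    · rw [Finset.sum_mul]
      apply Finset.sum_congr rfl
      intro σ hσ
      rw [(Finset.mem_filter.1 hσ).2, mul_one, Real.exp_add]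
    · apply Finset.sum_congr rfl
      intro σ hσ
      have h0 : q σ = 0 := (hq σ).resolve_right (Finset.mem_filter.1 hσ).2
      rw [h0, mul_zero, add_zero]
  · rw [← Finset.sum_filter_add_sum_filter_not Finset.univ (fun σ : V → Bool => q σ = 1)]
    have hz : ∑ σ ∈ Finset.univ.filter (fun σ : V → Bool => ¬ q σ = 1),
        Real.exp (w0 σ + x * q σ) * q σ = 0 := by
      apply Finset.sum_eq_zero
      intro σ hσ
      have h0 : q σ = 0 := (hq σ).resolve_right (Finset.mem_filter.1 hσ).2
      rw [h0, mul_zero]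
    rw [hz, add_zero, Finset.sum_mul]
    apply Finset.sum_congr rfl
    intro σ hσ
    rw [(Finset.mem_filter.1 hσ).2, mul_one, Real.exp_add]
    ring

/-- The heart of the argument: on a logistic slice, the sign of the payoff derivative
equals the sign of the potential derivative. -/
lemma core {A B β : ℝ} (hA : 0 < A) (hB : 0 < B) (hβ : 0 < β)
    {f f' : ℝ → ℝ} (hf' : ∀ y, HasDerivAt f (f' y) y)
    (hconc : StrictConcaveOn ℝ (Set.Icc 0 1) f) (t K : ℝ) :
    Real.sign (deriv (fun x => f (A * Real.exp x / (A * Real.exp x + B))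
        - (1/β) * (x * (A * Real.exp x / (A * Real.exp x + B))
          + Real.log (1 - A * Real.exp x / (A * Real.exp x + B)))) t)
      = Real.sign (deriv (fun x =>
          -((1/β) * Real.log (A * Real.exp x + B)
            + sSup ((fun y => f y - (x/β) * y) '' Set.Icc 0 1) + K)) t) := by
  set sx : ℝ → ℝ := fun x => A * Real.exp x / (A * Real.exp x + B) with hsx
  set s0 : ℝ := sx t with hs0def
  have hs0 : s0 ∈ Set.Ioo (0:ℝ) 1 := logistic_mem hA hB t
  have hs' : HasDerivAt sx (s0 * (1 - s0)) t := logistic_hasDeriv hA hB t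
  have h1ms : (0:ℝ) < 1 - s0 := by linarith [hs0.2]
  -- derivative of the payoff slice
  have hΨ : HasDerivAt (fun x => f (sx x)
      - (1/β) * (x * sx x + Real.log (1 - sx x)))
      (s0 * (1 - s0) * (f' s0 - t/β)) t := by
    have h1 : HasDerivAt (fun x => f (sx x)) (f' s0 * (s0 * (1 - s0))) t :=
      HasDerivAt.comp t (hf' s0) hs'
    have h2 : HasDerivAt (fun x => x * sx x) (1 * s0 + t * (s0 * (1 - s0))) t :=
      (hasDerivAt_id t).mul hs'
    have h3 : HasDerivAt (fun x => 1 - sx x) (-(s0 * (1 - s0))) t := by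
      have := (hasDerivAt_const t (1:ℝ)).sub hs'
      rw [zero_sub] at this
      exact this
    have h4 : HasDerivAt (fun x => Real.log (1 - sx x))
        ((1 - s0)⁻¹ * -(s0 * (1 - s0))) t :=
      HasDerivAt.comp t (Real.hasDerivAt_log (ne_of_gt h1ms)) h3
    have h5 := (h1.sub ((h2.add h4).const_mul (1/β)) : HasDerivAt (fun x => f (sx x)
      - (1/β) * (x * sx x + Real.log (1 - sx x))) _ t)
    refine h5.congr_deriv ?_
    field_simp
    ring
  -- derivative of the potential slice
  have hfc : Continuous f := continuous_iff_continuousAt.2 (fun y => (hf' y).continuousAt)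
  obtain ⟨xs, hxs, hmax⟩ := exists_max (f := fun y => f y - (t/β) * y)
    (hfc.continuousOn.sub ((continuous_const.mul continuous_id).continuousOn))
  have hdG : HasDerivAt (fun u => sSup ((fun y => f y - u * y) '' Set.Icc 0 1)) (-xs) (t/β) :=
    danskin hfc.continuousOn hconc hxs hmax
  have hinner : HasDerivAt (fun x : ℝ => x/β) (1/β) t := by
    simpa using (hasDerivAt_id t).div_const β
  have hG : HasDerivAt (fun x => sSup ((fun y => f y - (x/β) * y) '' Set.Icc 0 1))
      (-xs * (1/β)) t := by have := HasDerivAt.comp t hdG hinner; exact this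
  have hP : HasDerivAt (fun x =>
      -((1/β) * Real.log (A * Real.exp x + B)
        + sSup ((fun y => f y - (x/β) * y) '' Set.Icc 0 1) + K))
      (-((1/β) * s0 + -xs * (1/β) + 0)) t := by
    exact ((((logistic_log_hasDeriv hA hB t).const_mul (1/β)).add hG).add
      (hasDerivAt_const t K)).neg
  rw [hΨ.deriv, hP.deriv]
  have e1 : s0 * (1 - s0) * (f' s0 - t/β) = (s0 * (1 - s0)) * (f' s0 - t/β) := by ring
  have e2 : -((1/β) * s0 + -xs * (1/β) + 0) = (1/β) * (xs - s0) := by ring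
  rw [e1, e2, sign_mul_pos (by nlinarith [hs0.1, hs0.2] : (0:ℝ) < s0 * (1 - s0)),
    sign_mul_pos (by positivity : (0:ℝ) < 1/β)]
  -- position of the maximizer
  have hFconc : StrictConcaveOn ℝ (Set.Icc 0 1) (fun y => f y - (t/β) * y) :=
    hconc.sub_convexOn (convexOn_lin (t/β))
  have hdF : HasDerivAt (fun y => f y - (t/β) * y) (f' s0 - t/β) s0 := by
    have := (hf' s0).sub ((hasDerivAt_id s0).const_mul (t/β))
    rw [mul_one] at this
    exact this
  exact sign_eq_of_max hFconc hdF hs0 hxs hmax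

end Aux

theorem ordinal_potential_game
    (E : Finset (V × V)) (U : V × V → ℝ → ℝ) (C : V → ℝ → ℝ)
    (U' : V × V → ℝ → ℝ) (C' : V → ℝ → ℝ) (β : ℝ) (hβ : 0 < β)
    (hU : ∀ e ∈ E, StrictConcaveOn ℝ (Set.Icc (0:ℝ) 1) (U e))
    (hC : ∀ i, StrictConvexOn ℝ (Set.Icc (0:ℝ) 1) (C i))
    (hU' : ∀ e ∈ E, ∀ x : ℝ, HasDerivAt (U e) (U' e x) x)
    (hC' : ∀ i, ∀ x : ℝ, HasDerivAt (C i) (C' i x) x)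
    (θv : V → ℝ) (θe : V × V → ℝ)
    -- region of non-trivial marginals
    (hsN : ∀ i, sN E θv θe i ∈ Set.Ioo (0:ℝ) 1)
    (hsE : ∀ e ∈ E, sE E θv θe e ∈ Set.Ioo (0:ℝ) 1) :
    (∀ i : V,
      Real.sign (deriv (fun x => ΨN E C β (Function.update θv i x) θe i) (θv i)) =
      Real.sign (deriv (fun x => P E U C β (Function.update θv i x) θe) (θv i))) ∧
    (∀ e ∈ E,
      Real.sign (deriv (fun x => ΨE E U β θv (Function.update θe e x) e) (θe e)) =
      Real.sign (deriv (fun x => P E U C β θv (Function.update θe e x)) (θe e))) := by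
  classical
  have hUc : ∀ e ∈ E, ContinuousOn (U e) (Set.Icc (0:ℝ) 1) := fun e he =>
    (continuous_iff_continuousAt.2 (fun y => (hU' e he y).continuousAt)).continuousOn
  have hCc : ∀ i, ContinuousOn (C i) (Set.Icc (0:ℝ) 1) := fun i =>
    (continuous_iff_continuousAt.2 (fun y => (hC' i y).continuousAt)).continuousOn
  constructor
  · -- node players
    intro i
    set q : (V → Bool) → ℝ := fun σ => ind (σ i) with hqdef
    have hq : ∀ σ, q σ = 0 ∨ q σ = 1 := by
      intro σ
      by_cases h : σ i <;> simp [hqdef, ind, h]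
    set w0 : (V → Bool) → ℝ := fun σ => weight E θv θe σ - θv i * ind (σ i) with hw0
    set A : ℝ := ∑ σ ∈ Finset.univ.filter (fun σ : V → Bool => q σ = 1),
      Real.exp (w0 σ) with hAdef
    set B : ℝ := ∑ σ ∈ Finset.univ.filter (fun σ : V → Bool => ¬ q σ = 1),
      Real.exp (w0 σ) with hBdef
    have hA : 0 < A := Finset.sum_pos (fun σ _ => Real.exp_pos _)
      ⟨fun _ => true, Finset.mem_filter.2 ⟨Finset.mem_univ _, by simp [hqdef, ind]⟩⟩
    have hB : 0 < B := Finset.sum_pos (fun σ _ => Real.exp_pos _)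
      ⟨fun _ => false, Finset.mem_filter.2 ⟨Finset.mem_univ _, by simp [hqdef, ind]⟩⟩
    have hwu : ∀ (x : ℝ) σ, weight E (Function.update θv i x) θe σ = w0 σ + x * q σ := by
      intro x σ
      rw [weight_update_node]
    have hZx : ∀ x : ℝ, Z E (Function.update θv i x) θe = A * Real.exp x + B := by
      intro x
      unfold Z
      rw [Finset.sum_congr rfl (fun σ _ => by rw [hwu x σ])]
      exact (slice_sums w0 q hq x).1
    have hsxeq : ∀ x : ℝ, sN E (Function.update θv i x) θe i
        = A * Real.exp x / (A * Real.exp x + B) := by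
      intro x
      unfold sN p
      rw [Finset.sum_congr rfl (fun σ _ => by
        rw [hwu x σ, hZx x, div_mul_eq_mul_div])]
      rw [← Finset.sum_div, (slice_sums w0 q hq x).2]
    have hΨfun : (fun x => ΨN E C β (Function.update θv i x) θe i)
        = (fun x => -C i (A * Real.exp x / (A * Real.exp x + B))
            - (1/β) * (x * (A * Real.exp x / (A * Real.exp x + B))
              + Real.log (1 - A * Real.exp x / (A * Real.exp x + B)))) := by
      funext x
      unfold ΨN
      rw [hsxeq x, Function.update_self]
    set K : ℝ := (∑ e ∈ E, sSup ((fun y => U e y - (θe e / β) * y) '' Set.Icc 0 1))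
      + ∑ j ∈ Finset.univ.erase i,
          sSup ((fun y => -(C j y) - (θv j / β) * y) '' Set.Icc 0 1) with hKdef
    have hPfun : (fun x => P E U C β (Function.update θv i x) θe)
        = (fun x => -((1/β) * Real.log (A * Real.exp x + B)
            + sSup ((fun y => -(C i y) - (x/β) * y) '' Set.Icc 0 1) + K)) := by
      funext x
      unfold P
      rw [sup_formula E U C β hβ hUc hCc (Function.update θv i x) θe, hZx x]
      rw [← Finset.add_sum_erase Finset.univ _ (Finset.mem_univ i)]
      rw [Function.update_self]
      have herase : (∑ j ∈ Finset.univ.erase i,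
            sSup ((fun y => -C j y - Function.update θv i x j / β * y) '' Set.Icc 0 1))
          = ∑ j ∈ Finset.univ.erase i,
            sSup ((fun y => -C j y - θv j / β * y) '' Set.Icc 0 1) := by
        apply Finset.sum_congr rfl
        intro j hj
        rw [Function.update_of_ne (Finset.mem_erase.1 hj).1]
      rw [herase, hKdef]
      ring
    rw [hΨfun, hPfun]
    exact core hA hB hβ (f := fun y => -(C i y)) (f' := fun y => -(C' i y))
      (fun y => (hC' i y).neg) ((hC i).neg) (θv i) K
  · -- edge players
    intro e he
    set q : (V → Bool) → ℝ := fun σ => ind (σ e.1) * ind (σ e.2) with hqdef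
    have hq : ∀ σ, q σ = 0 ∨ q σ = 1 := by
      intro σ
      by_cases h1 : σ e.1 <;> by_cases h2 : σ e.2 <;> simp [hqdef, ind, h1, h2]
    set w0 : (V → Bool) → ℝ := fun σ =>
      weight E θv θe σ - θe e * (ind (σ e.1) * ind (σ e.2)) with hw0
    set A : ℝ := ∑ σ ∈ Finset.univ.filter (fun σ : V → Bool => q σ = 1),
      Real.exp (w0 σ) with hAdef
    set B : ℝ := ∑ σ ∈ Finset.univ.filter (fun σ : V → Bool => ¬ q σ = 1),
      Real.exp (w0 σ) with hBdef
    have hA : 0 < A := Finset.sum_pos (fun σ _ => Real.exp_pos _)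
      ⟨fun _ => true, Finset.mem_filter.2 ⟨Finset.mem_univ _, by simp [hqdef, ind]⟩⟩
    have hB : 0 < B := Finset.sum_pos (fun σ _ => Real.exp_pos _)
      ⟨fun _ => false, Finset.mem_filter.2 ⟨Finset.mem_univ _, by simp [hqdef, ind]⟩⟩
    have hwu : ∀ (x : ℝ) σ, weight E θv (Function.update θe e x) σ = w0 σ + x * q σ := by
      intro x σ
      rw [weight_update_edge E θv θe he]
    have hZx : ∀ x : ℝ, Z E θv (Function.update θe e x) = A * Real.exp x + B := by
      intro x
      unfold Z
      rw [Finset.sum_congr rfl (fun σ _ => by rw [hwu x σ])]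
      exact (slice_sums w0 q hq x).1
    have hsxeq : ∀ x : ℝ, sE E θv (Function.update θe e x) e
        = A * Real.exp x / (A * Real.exp x + B) := by
      intro x
      unfold sE p
      rw [Finset.sum_congr rfl (fun σ _ => by
        rw [hwu x σ, hZx x, div_mul_eq_mul_div])]
      rw [← Finset.sum_div, (slice_sums w0 q hq x).2]
    have hΨfun : (fun x => ΨE E U β θv (Function.update θe e x) e)
        = (fun x => U e (A * Real.exp x / (A * Real.exp x + B))
            - (1/β) * (x * (A * Real.exp x / (A * Real.exp x + B))
              + Real.log (1 - A * Real.exp x / (A * Real.exp x + B)))) := by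
      funext x
      unfold ΨE
      rw [hsxeq x, Function.update_self]
    set K : ℝ := (∑ e' ∈ E.erase e, sSup ((fun y => U e' y - (θe e' / β) * y) '' Set.Icc 0 1))
      + ∑ j, sSup ((fun y => -(C j y) - (θv j / β) * y) '' Set.Icc 0 1) with hKdef
    have hPfun : (fun x => P E U C β θv (Function.update θe e x))
        = (fun x => -((1/β) * Real.log (A * Real.exp x + B)
            + sSup ((fun y => U e y - (x/β) * y) '' Set.Icc 0 1) + K)) := by
      funext x
      unfold P
      rw [sup_formula E U C β hβ
        (fun e' he' => hUc e' he') hCc θv (Function.update θe e x), hZx x]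
      rw [← Finset.add_sum_erase E _ he]
      rw [Function.update_self]
      have herase : (∑ e' ∈ E.erase e,
            sSup ((fun y => U e' y - Function.update θe e x e' / β * y) '' Set.Icc 0 1))
          = ∑ e' ∈ E.erase e,
            sSup ((fun y => U e' y - θe e' / β * y) '' Set.Icc 0 1) := by
        apply Finset.sum_congr rfl
        intro e' he'
        rw [Function.update_of_ne (Finset.mem_erase.1 he').1]
      rw [herase, hKdef]
      ring
    rw [hΨfun, hPfun]
    exact core hA hB hβ (f := U e) (f' := U' e) (hU' e he) (hU e he) (θe e) K

end Stmt13
end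

section
/- Suppose $\theta^{NE}$ is a strategy profile at which the marginals satisfy $\theta^{NE}_i = -\beta C_i'(s_i(\theta^{NE}))$ for all $i \in V$ and $\theta^{NE}_{ij} = \beta U_{ij}'(s_{ij}(\theta^{NE}))$ for all $(i,j)\in E$, and let $\lambda^\star$ maximize $F(\lambda)=\sum U_{ij}(\lambda_{ij})-\sum C_i(\lambda_i)$ over the coordination region $\Lambda$. Then the Price of Anarchy satisfies $F(\lambda^\star) - F(s(\theta^{NE})) \leq \frac{\log|\mathcal{I}(G)|}{\beta} = \frac{|V|\log 2}{\beta}$; in particular the gain at $\theta^{NE}$ converges to the social optimum as $\beta \to \infty$. -/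
/-!
Statement 18: If `θ^{NE}` satisfies the fixed-point conditions
`θ_i = -β C_i'(s_i(θ))` and `θ_{ij} = β U_{ij}'(s_{ij}(θ))`, and `λ⋆`
maximizes `F` over the coordination region, then
`F(λ⋆) - F(s(θ^{NE})) ≤ log|𝓘(G)|/β = |V| log 2 / β`.
-/

open Finset

namespace Stmt18

variable {V : Type*} [Fintype V] [DecidableEq V]

noncomputable def ind (b : Bool) : ℝ := if b then 1 else 0

noncomputable def weight (E : Finset (V × V)) (θv : V → ℝ) (θe : V × V → ℝ)
    (σ : V → Bool) : ℝ :=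
  ∑ i, θv i * ind (σ i) + ∑ e ∈ E, θe e * ind (σ e.1) * ind (σ e.2)

noncomputable def Z (E : Finset (V × V)) (θv : V → ℝ) (θe : V × V → ℝ) : ℝ :=
  ∑ σ : V → Bool, Real.exp (weight E θv θe σ)

noncomputable def p (E : Finset (V × V)) (θv : V → ℝ) (θe : V × V → ℝ)
    (σ : V → Bool) : ℝ :=
  Real.exp (weight E θv θe σ) / Z E θv θe

noncomputable def sN (E : Finset (V × V)) (θv : V → ℝ) (θe : V × V → ℝ) (i : V) : ℝ :=
  ∑ σ : V → Bool, p E θv θe σ * ind (σ i)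

noncomputable def sE (E : Finset (V × V)) (θv : V → ℝ) (θe : V × V → ℝ) (e : V × V) : ℝ :=
  ∑ σ : V → Bool, p E θv θe σ * (ind (σ e.1) * ind (σ e.2))

def IsDist (μ : (V → Bool) → ℝ) : Prop :=
  (∀ σ, 0 ≤ μ σ) ∧ ∑ σ : V → Bool, μ σ = 1

noncomputable def meanN (μ : (V → Bool) → ℝ) (i : V) : ℝ :=
  ∑ σ : V → Bool, μ σ * ind (σ i)

noncomputable def meanE (μ : (V → Bool) → ℝ) (e : V × V) : ℝ :=
  ∑ σ : V → Bool, μ σ * (ind (σ e.1) * ind (σ e.2))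

noncomputable def Fobj (E : Finset (V × V)) (U : V × V → ℝ → ℝ) (C : V → ℝ → ℝ)
    (lv : V → ℝ) (le : V × V → ℝ) : ℝ :=
  ∑ e ∈ E, U e (le e) - ∑ i, C i (lv i)


-- ════════ auxiliary lemmas ════════

lemma tangent_convex' {f : ℝ → ℝ} {f' : ℝ → ℝ} {x y : ℝ}
    (hf : ConvexOn ℝ (Set.Icc (0:ℝ) 1) f)
    (hd : ∀ x, HasDerivAt f (f' x) x)
    (hx : x ∈ Set.Icc (0:ℝ) 1) (hy : y ∈ Set.Icc (0:ℝ) 1) :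
    f x + f' x * (y - x) ≤ f y := by
  rcases lt_trichotomy x y with h | h | h
  · have h1 := hf.le_slope_of_hasDerivAt hx hy h (hd x)
    rw [slope_def_field] at h1
    have h2 : 0 < y - x := by linarith
    have := (le_div_iff₀ h2).mp h1
    linarith
  · subst h; simp
  · have h1 := hf.slope_le_of_hasDerivAt hy hx h (hd x)
    rw [slope_def_field] at h1
    have h2 : 0 < x - y := by linarith
    have := (div_le_iff₀ h2).mp h1
    nlinarith

lemma tangent_concave' {f : ℝ → ℝ} {f' : ℝ → ℝ} {x y : ℝ}
    (hf : ConcaveOn ℝ (Set.Icc (0:ℝ) 1) f)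
    (hd : ∀ x, HasDerivAt f (f' x) x)
    (hx : x ∈ Set.Icc (0:ℝ) 1) (hy : y ∈ Set.Icc (0:ℝ) 1) :
    f y ≤ f x + f' x * (y - x) := by
  have hneg : ConvexOn ℝ (Set.Icc (0:ℝ) 1) (fun t => -f t) := hf.neg
  have hd' : ∀ x, HasDerivAt (fun t => -f t) (-f' x) x := fun x => (hd x).neg
  have := tangent_convex' hneg hd' hx hy
  linarith

noncomputable def Hent (μ : (V → Bool) → ℝ) : ℝ :=
  ∑ σ : V → Bool, -(μ σ * Real.log (μ σ))

variable (E : Finset (V × V)) (θv : V → ℝ) (θe : V × V → ℝ)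

lemma Z_pos : 0 < Z E θv θe :=
  Finset.sum_pos (fun _ _ => Real.exp_pos _) univ_nonempty

lemma p_pos (σ : V → Bool) : 0 < p E θv θe σ :=
  div_pos (Real.exp_pos _) (Z_pos E θv θe)

lemma p_sum : ∑ σ : V → Bool, p E θv θe σ = 1 := by
  simp only [p, ← Finset.sum_div]
  exact div_self (Z_pos E θv θe).ne'

lemma log_p (σ : V → Bool) :
    Real.log (p E θv θe σ) = weight E θv θe σ - Real.log (Z E θv θe) := by
  rw [p, Real.log_div (Real.exp_ne_zero _) (Z_pos E θv θe).ne', Real.log_exp]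

lemma gibbs_eq :
    ∑ σ : V → Bool, p E θv θe σ * weight E θv θe σ + Hent (p E θv θe)
      = Real.log (Z E θv θe) := by
  rw [Hent, ← Finset.sum_add_distrib]
  have : ∀ σ : V → Bool, p E θv θe σ * weight E θv θe σ +
      -(p E θv θe σ * Real.log (p E θv θe σ)) = p E θv θe σ * Real.log (Z E θv θe) := by
    intro σ; rw [log_p]; ring
  rw [Finset.sum_congr rfl fun σ _ => this σ, ← Finset.sum_mul, p_sum, one_mul]

lemma gibbs_le (μ : (V → Bool) → ℝ) (hpos : ∀ σ, 0 ≤ μ σ)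
    (hsum : ∑ σ : V → Bool, μ σ = 1) :
    ∑ σ : V → Bool, μ σ * weight E θv θe σ + Hent μ ≤ Real.log (Z E θv θe) := by
  have hZ := Z_pos E θv θe
  have key : ∀ σ : V → Bool, μ σ * weight E θv θe σ + -(μ σ * Real.log (μ σ))
      ≤ Real.exp (weight E θv θe σ) / Z E θv θe - μ σ + μ σ * Real.log (Z E θv θe) := by
    intro σ
    rcases eq_or_lt_of_le (hpos σ) with h | h
    · rw [← h]; simp; positivity
    · set w := weight E θv θe σ
      have ht : 0 < Real.exp w / (μ σ * Z E θv θe) := by positivity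
      have hlog := Real.log_le_sub_one_of_pos ht
      have hlt : Real.log (Real.exp w / (μ σ * Z E θv θe))
          = w - Real.log (μ σ) - Real.log (Z E θv θe) := by
        rw [Real.log_div (Real.exp_ne_zero _) (by positivity),
          Real.log_mul h.ne' hZ.ne', Real.log_exp]; ring
      rw [hlt] at hlog
      have := mul_le_mul_of_nonneg_left hlog (hpos σ)
      have hms : μ σ * (Real.exp w / (μ σ * Z E θv θe) - 1)
          = Real.exp w / Z E θv θe - μ σ := by
        field_simp
      rw [hms] at this; nlinarith
  have hsumle := Finset.sum_le_sum fun σ (_ : σ ∈ univ) => key σ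
  rw [Hent, ← Finset.sum_add_distrib]
  refine le_trans hsumle ?_
  rw [Finset.sum_add_distrib, Finset.sum_sub_distrib, ← Finset.sum_div, ← Finset.sum_mul,
    hsum, one_mul]
  have : (∑ σ : V → Bool, Real.exp (weight E θv θe σ)) / Z E θv θe = 1 :=
    div_self hZ.ne'
  rw [this]; ring_nf; rfl

lemma Hent_nonneg (μ : (V → Bool) → ℝ) (hpos : ∀ σ, 0 ≤ μ σ)
    (hsum : ∑ σ : V → Bool, μ σ = 1) : 0 ≤ Hent μ := by
  refine Finset.sum_nonneg fun σ _ => ?_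
  have h1 : μ σ ≤ 1 := by
    rw [← hsum]
    exact Finset.single_le_sum (fun τ _ => hpos τ) (mem_univ σ)
  have : μ σ * Real.log (μ σ) ≤ 0 :=
    mul_nonpos_of_nonneg_of_nonpos (hpos σ) (Real.log_nonpos (hpos σ) h1)
  linarith

lemma Hent_p_le :
    Hent (p E θv θe) ≤ Real.log (Fintype.card (V → Bool)) := by
  set N : ℝ := (Fintype.card (V → Bool) : ℝ) with hN
  have hNpos : 0 < N := by
    rw [hN]; exact_mod_cast Fintype.card_pos
  have key : ∀ σ : V → Bool, -(p E θv θe σ * Real.log (p E θv θe σ))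
      ≤ 1 / N - p E θv θe σ + p E θv θe σ * Real.log N := by
    intro σ
    have hp := p_pos E θv θe σ
    have ht : 0 < 1 / (p E θv θe σ * N) := by positivity
    have hlog := Real.log_le_sub_one_of_pos ht
    have hlt : Real.log (1 / (p E θv θe σ * N))
        = -Real.log (p E θv θe σ) - Real.log N := by
      rw [Real.log_div one_ne_zero (by positivity), Real.log_mul hp.ne' hNpos.ne',
        Real.log_one]; ring
    rw [hlt] at hlog
    have := mul_le_mul_of_nonneg_left hlog hp.le
    have hms : p E θv θe σ * (1 / (p E θv θe σ * N) - 1) = 1 / N - p E θv θe σ := by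
      field_simp
    rw [hms] at this; nlinarith
  have hle := Finset.sum_le_sum fun σ (_ : σ ∈ univ) => key σ
  rw [Hent] at *
  refine le_trans hle ?_
  rw [Finset.sum_add_distrib, Finset.sum_sub_distrib, ← Finset.sum_mul, p_sum, one_mul,
    Finset.sum_const, Finset.card_univ, nsmul_eq_mul]
  have : (Fintype.card (V → Bool) : ℝ) * (1 / N) = 1 := by
    rw [hN]; field_simp
  rw [this]; linarith

lemma mean_weight (μ : (V → Bool) → ℝ) :
    ∑ σ : V → Bool, μ σ * weight E θv θe σ
      = ∑ i, θv i * (∑ σ : V → Bool, μ σ * ind (σ i))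
        + ∑ e ∈ E, θe e * (∑ σ : V → Bool, μ σ * (ind (σ e.1) * ind (σ e.2))) := by
  simp only [weight, mul_add, Finset.sum_add_distrib, Finset.mul_sum]
  congr 1
  · rw [Finset.sum_comm]
    exact Finset.sum_congr rfl fun i _ => Finset.sum_congr rfl fun σ _ => by ring
  · rw [Finset.sum_comm]
    exact Finset.sum_congr rfl fun e _ => Finset.sum_congr rfl fun σ _ => by ring

lemma ind_mem (b : Bool) : ind b ∈ Set.Icc (0:ℝ) 1 := by
  rw [ind]; split <;> norm_num

lemma mean_mem_Icc (μ : (V → Bool) → ℝ) (hpos : ∀ σ, 0 ≤ μ σ)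
    (hsum : ∑ σ : V → Bool, μ σ = 1) (g : (V → Bool) → ℝ)
    (hg0 : ∀ σ, 0 ≤ g σ) (hg1 : ∀ σ, g σ ≤ 1) :
    (∑ σ : V → Bool, μ σ * g σ) ∈ Set.Icc (0:ℝ) 1 := by
  constructor
  · exact Finset.sum_nonneg fun σ _ => mul_nonneg (hpos σ) (hg0 σ)
  · calc ∑ σ : V → Bool, μ σ * g σ ≤ ∑ σ : V → Bool, μ σ :=
          Finset.sum_le_sum fun σ _ => by nlinarith [hpos σ, hg0 σ, hg1 σ]
      _ = 1 := hsum

theorem price_of_anarchy_bound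
    (E : Finset (V × V)) (U U' : V × V → ℝ → ℝ) (C C' : V → ℝ → ℝ)
    (β : ℝ) (hβ : 0 < β)
    (hU : ∀ e ∈ E, StrictConcaveOn ℝ (Set.Icc (0:ℝ) 1) (U e))
    (hC : ∀ i, StrictConvexOn ℝ (Set.Icc (0:ℝ) 1) (C i))
    (hU' : ∀ e ∈ E, ∀ x : ℝ, HasDerivAt (U e) (U' e x) x)
    (hC' : ∀ i, ∀ x : ℝ, HasDerivAt (C i) (C' i x) x)
    -- the fixed-point (Nash equilibrium) conditions
    (θv : V → ℝ) (θe : V × V → ℝ)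
    (hfixN : ∀ i, θv i = -β * C' i (sN E θv θe i))
    (hfixE : ∀ e ∈ E, θe e = β * U' e (sE E θv θe e))
    -- `λ⋆ = E_{μ⋆}[φ]` maximizes `F` over the coordination region `Λ`
    (μs : (V → Bool) → ℝ) (hμs : IsDist μs)
    (hstar : ∀ μ, IsDist μ →
      Fobj E U C (meanN μ) (meanE μ) ≤ Fobj E U C (meanN μs) (meanE μs)) :
    Fobj E U C (meanN μs) (meanE μs) -
      Fobj E U C (fun i => sN E θv θe i) (fun e => sE E θv θe e) ≤
        Real.log (Fintype.card (V → Bool)) / β ∧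
    Real.log (Fintype.card (V → Bool)) = (Fintype.card V : ℝ) * Real.log 2 := by
  have hpD : IsDist (p E θv θe) := ⟨fun σ => (p_pos E θv θe σ).le, p_sum E θv θe⟩
  constructor
  · -- bounds on marginals
    have hsv : ∀ i, sN E θv θe i ∈ Set.Icc (0:ℝ) 1 := fun i =>
      mean_mem_Icc _ hpD.1 hpD.2 _ (fun σ => (ind_mem (σ i)).1) (fun σ => (ind_mem (σ i)).2)
    have hse : ∀ e : V × V, sE E θv θe e ∈ Set.Icc (0:ℝ) 1 := fun e =>
      mean_mem_Icc _ hpD.1 hpD.2 _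
        (fun σ => mul_nonneg (ind_mem (σ e.1)).1 (ind_mem (σ e.2)).1)
        (fun σ => mul_le_one₀ (ind_mem (σ e.1)).2 (ind_mem (σ e.2)).1 (ind_mem (σ e.2)).2)
    have hlv : ∀ i, meanN μs i ∈ Set.Icc (0:ℝ) 1 := fun i =>
      mean_mem_Icc _ hμs.1 hμs.2 _ (fun σ => (ind_mem (σ i)).1) (fun σ => (ind_mem (σ i)).2)
    have hle : ∀ e : V × V, meanE μs e ∈ Set.Icc (0:ℝ) 1 := fun e =>
      mean_mem_Icc _ hμs.1 hμs.2 _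
        (fun σ => mul_nonneg (ind_mem (σ e.1)).1 (ind_mem (σ e.2)).1)
        (fun σ => mul_le_one₀ (ind_mem (σ e.1)).2 (ind_mem (σ e.2)).1 (ind_mem (σ e.2)).2)
    -- tangent-line inequalities at the Gibbs marginals
    have h1 : β * (∑ e ∈ E, U e (meanE μs e)) ≤
        β * (∑ e ∈ E, U e (sE E θv θe e)) + ∑ e ∈ E, θe e * (meanE μs e - sE E θv θe e) := by
      rw [Finset.mul_sum, Finset.mul_sum, ← Finset.sum_add_distrib]
      refine Finset.sum_le_sum fun e he => ?_
      have ht := tangent_concave' (hU e he).concaveOn (hU' e he) (hse e) (hle e)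
      rw [hfixE e he]
      calc β * U e (meanE μs e)
          ≤ β * (U e (sE E θv θe e) + U' e (sE E θv θe e) * (meanE μs e - sE E θv θe e)) :=
            mul_le_mul_of_nonneg_left ht hβ.le
        _ = β * U e (sE E θv θe e) +
            β * U' e (sE E θv θe e) * (meanE μs e - sE E θv θe e) := by ring
    have h2 : β * (∑ i, C i (sN E θv θe i)) ≤
        β * (∑ i, C i (meanN μs i)) + ∑ i, θv i * (meanN μs i - sN E θv θe i) := by
      rw [Finset.mul_sum, Finset.mul_sum, ← Finset.sum_add_distrib]
      refine Finset.sum_le_sum fun i _ => ?_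
      have ht := tangent_convex' (hC i).convexOn (hC' i) (hsv i) (hlv i)
      rw [hfixN i]
      have hmul := mul_le_mul_of_nonneg_left ht hβ.le
      nlinarith [hmul]
    -- Gibbs variational principle
    have hg1 := gibbs_le E θv θe μs hμs.1 hμs.2
    have hg2 := gibbs_eq E θv θe
    have hH1 := Hent_nonneg μs hμs.1 hμs.2
    have hH2 := Hent_p_le E θv θe
    have hm1 : ∑ σ : V → Bool, μs σ * weight E θv θe σ
        = ∑ i, θv i * meanN μs i + ∑ e ∈ E, θe e * meanE μs e := mean_weight E θv θe μs
    have hm2 : ∑ σ : V → Bool, p E θv θe σ * weight E θv θe σ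
        = ∑ i, θv i * sN E θv θe i + ∑ e ∈ E, θe e * sE E θv θe e :=
      mean_weight E θv θe (p E θv θe)
    have h3 : ∑ e ∈ E, θe e * (meanE μs e - sE E θv θe e)
        = (∑ e ∈ E, θe e * meanE μs e) - ∑ e ∈ E, θe e * sE E θv θe e := by
      rw [← Finset.sum_sub_distrib]
      exact Finset.sum_congr rfl fun e _ => by ring
    have h4 : ∑ i, θv i * (meanN μs i - sN E θv θe i)
        = (∑ i, θv i * meanN μs i) - ∑ i, θv i * sN E θv θe i := by
      rw [← Finset.sum_sub_distrib]
      exact Finset.sum_congr rfl fun i _ => by ring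
    have hF1 : Fobj E U C (meanN μs) (meanE μs)
        = ∑ e ∈ E, U e (meanE μs e) - ∑ i, C i (meanN μs i) := rfl
    have hF2 : Fobj E U C (fun i => sN E θv θe i) (fun e => sE E θv θe e)
        = ∑ e ∈ E, U e (sE E θv θe e) - ∑ i, C i (sN E θv θe i) := rfl
    have main : β * (Fobj E U C (meanN μs) (meanE μs) -
        Fobj E U C (fun i => sN E θv θe i) (fun e => sE E θv θe e))
        ≤ Real.log (Fintype.card (V → Bool)) := by
      rw [hF1, hF2]
      have hexp : β * ((∑ e ∈ E, U e (meanE μs e) - ∑ i, C i (meanN μs i)) -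
          (∑ e ∈ E, U e (sE E θv θe e) - ∑ i, C i (sN E θv θe i)))
          = β * (∑ e ∈ E, U e (meanE μs e)) - β * (∑ i, C i (meanN μs i))
            - β * (∑ e ∈ E, U e (sE E θv θe e)) + β * (∑ i, C i (sN E θv θe i)) := by ring
      rw [hexp]
      linarith
    rw [le_div_iff₀ hβ]
    nlinarith [main]
  · rw [Fintype.card_fun, Fintype.card_bool, Nat.cast_pow, Nat.cast_ofNat, Real.log_pow]


end Stmt18
end
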